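/- arXiv:1305.6748 — 3 statements merged into one kernel-verified Lean document; each statement's English description precedes it below -/
import Mathlib

section
/- Let Γ be a simplicial graph with groups {G_v}, G = ΓG, and v a vertex. Set A = VΓ∖{v}. Then the canonical retraction ρ_A : G → G_A gives a split short exact sequence 1 → K → G → G_A → 1, where the kernel K = ker(ρ_A) is isomorphic to the free product of the conjugates gG_v g⁻¹ as g ranges over a transversal of G_{link(v)} in G_A. In particular G ≅ K ⋊ G_A. -/
open scoped commutatorElement

/-- The commutation relators defining a graph product: commutators of elements of
vertex groups joined by an edge of `Γ`. -/
def GraphProductRels {V : Type*} (Γ : SimpleGraph V) (G : V → Type*)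
    [∀ v, Group (G v)] : Set (Monoid.CoprodI G) :=
  {x | ∃ (u v : V) (a : G u) (b : G v), Γ.Adj u v ∧
    x = ⁅Monoid.CoprodI.of a, Monoid.CoprodI.of b⁆}

/-- The graph product of the groups `G v` over the simplicial graph `Γ`: the quotient
of the free product by the normal closure of the edge commutation relators. -/
abbrev GraphProduct {V : Type*} (Γ : SimpleGraph V) (G : V → Type*)
    [∀ v, Group (G v)] : Type _ :=
  Monoid.CoprodI G ⧸ Subgroup.normalClosure (GraphProductRels Γ G)

/-- The canonical map from a vertex group to the graph product. -/
def GraphProduct.of {V : Type*} {Γ : SimpleGraph V} {G : V → Type*}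
    [∀ v, Group (G v)] {v : V} : G v →* GraphProduct Γ G :=
  (QuotientGroup.mk' _).comp Monoid.CoprodI.of

/-- The special subgroup of a graph product corresponding to a subset `A` of vertices. -/
def GraphProduct.special {V : Type*} (Γ : SimpleGraph V) (G : V → Type*)
    [∀ v, Group (G v)] (A : Set V) : Subgroup (GraphProduct Γ G) :=
  Subgroup.closure (⋃ v ∈ A, Set.range (GraphProduct.of (Γ := Γ) (v := v)))

namespace GPAux

variable {V : Type*} (Γ : SimpleGraph V) (G : V → Type*) [∀ v, Group (G v)]

theorem commute_of_adj {u w : V} (h : Γ.Adj u w) (a : G u) (b : G w) :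
    Commute (GraphProduct.of (Γ := Γ) a) (GraphProduct.of (Γ := Γ) b) := by
  rw [← commutatorElement_eq_one_iff_commute]
  have hmem : ⁅Monoid.CoprodI.of a, Monoid.CoprodI.of b⁆ ∈
      Subgroup.normalClosure (GraphProductRels Γ G) :=
    Subgroup.subset_normalClosure ⟨u, w, a, b, h, rfl⟩
  show ⁅(QuotientGroup.mk' _) (Monoid.CoprodI.of a), (QuotientGroup.mk' _) (Monoid.CoprodI.of b)⁆ = 1
  rw [← map_commutatorElement]
  exact (QuotientGroup.eq_one_iff _).2 hmem

theorem hom_ext {M : Type*} [Group M] {f g : GraphProduct Γ G →* M}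
    (h : ∀ (u : V) (x : G u), f (GraphProduct.of x) = g (GraphProduct.of x)) : f = g :=
  QuotientGroup.monoidHom_ext _ (Monoid.CoprodI.ext_hom _ _ fun u => MonoidHom.ext (h u))

/-- Lift a family of homs commuting along edges to a hom from the graph product. -/
def lift {M : Type*} [Group M] (f : ∀ u, G u →* M)
    (hf : ∀ u w, Γ.Adj u w → ∀ (a : G u) (b : G w), Commute (f u a) (f w b)) :
    GraphProduct Γ G →* M :=
  QuotientGroup.lift _ (Monoid.CoprodI.lift f) (by
    intro x hx
    have : x ∈ (Monoid.CoprodI.lift f).ker := by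
      refine Subgroup.normalClosure_le_normal ?_ hx
      rintro y ⟨u, w, a, b, hadj, rfl⟩
      simp only [SetLike.mem_coe, MonoidHom.mem_ker, map_commutatorElement,
        Monoid.CoprodI.lift_of]
      exact commutatorElement_eq_one_iff_commute.2 (hf u w hadj a b)
    exact this)

@[simp] theorem lift_of {M : Type*} [Group M] (f : ∀ u, G u →* M) (hf) {u : V} (x : G u) :
    lift Γ G f hf (GraphProduct.of x) = f u x := by
  simp [lift, GraphProduct.of]


theorem of_mem_special {A : Set V} {u : V} (hu : u ∈ A) (x : G u) :
    GraphProduct.of (Γ := Γ) x ∈ GraphProduct.special Γ G A :=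
  Subgroup.subset_closure (Set.mem_biUnion hu ⟨x, rfl⟩)

theorem special_mono {A B : Set V} (h : A ⊆ B) :
    GraphProduct.special Γ G A ≤ GraphProduct.special Γ G B :=
  Subgroup.closure_mono (Set.biUnion_subset_biUnion_left h)

/-- Induction over membership in a special subgroup. -/
theorem special_induction {A : Set V} {p : (g : GraphProduct Γ G) → Prop}
    {g : GraphProduct Γ G} (hg : g ∈ GraphProduct.special Γ G A)
    (mem : ∀ (u : V), u ∈ A → ∀ (x : G u), p (GraphProduct.of x))
    (one : p 1) (mul : ∀ a b, p a → p b → p (a * b)) (inv : ∀ a, p a → p a⁻¹) : p g := by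
  refine Subgroup.closure_induction ?_ one (fun a b _ _ ha hb => mul a b ha hb)
    (fun a _ ha => inv a ha) hg
  rintro y hy
  simp only [Set.mem_iUnion] at hy
  obtain ⟨u, hu, x, rfl⟩ := hy
  exact mem u hu x

/-- Cast between vertex groups along an equality of vertices. -/
def castHom {u w : V} (h : u = w) : G u →* G w := by subst h; exact MonoidHom.id _

@[simp] theorem castHom_rfl (u : V) : castHom G (rfl : u = u) = MonoidHom.id _ := rfl

variable (v : V)

open Classical in
/-- The retraction onto a single vertex group. -/
noncomputable def projV : GraphProduct Γ G →* G v :=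
  lift Γ G (fun u => if h : u = v then castHom G h else 1)
    (by
      intro u w hadj a b
      by_cases hu : u = v <;> by_cases hw : w = v
      · exact absurd (hu.trans hw.symm) hadj.ne
      · simp only [dif_pos hu, dif_neg hw, MonoidHom.one_apply]
        exact Commute.one_right _
      · simp only [dif_neg hu, dif_pos hw, MonoidHom.one_apply]
        exact Commute.one_left _
      · simp only [dif_neg hu, MonoidHom.one_apply]
        exact Commute.one_left _)

@[simp] theorem projV_of (x : G v) : projV Γ G v (GraphProduct.of (Γ := Γ) x) = x := by
  simp [projV]

theorem of_injective : Function.Injective (GraphProduct.of (Γ := Γ) (G := G) (v := v)) := by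
  intro a b h
  have := congrArg (projV Γ G v) h
  simpa using this

theorem commute_special_link {c : GraphProduct Γ G}
    (hc : c ∈ GraphProduct.special Γ G (Γ.neighborSet v)) (x : G v) :
    Commute c (GraphProduct.of (Γ := Γ) x) := by
  refine special_induction (p := fun a => Commute a (GraphProduct.of (Γ := Γ) x)) Γ G hc ?_ (Commute.one_left _)
    (fun a b ha hb => ha.mul_left hb) (fun a ha => ha.inv_left)
  intro w hw b
  exact commute_of_adj Γ G (SimpleGraph.mem_neighborSet Γ v w |>.1 hw).symm b x

theorem neighborSet_subset_compl : (Γ.neighborSet v : Set V) ⊆ {v}ᶜ := by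
  intro w hw
  simp only [Set.mem_compl_iff, Set.mem_singleton_iff]
  rintro rfl
  exact Γ.irrefl hw


section Transversal

variable {T : Set (GraphProduct Γ G)}
variable (hT : ∀ g ∈ GraphProduct.special Γ G {v}ᶜ,
      ∃! t, t ∈ T ∧ t⁻¹ * g ∈ GraphProduct.special Γ G (Γ.neighborSet v))
variable (hTA : T ⊆ GraphProduct.special Γ G {v}ᶜ)

/-- Inclusion of the transversal into the special subgroup. -/
def tS (t : T) : GraphProduct.special Γ G {v}ᶜ := ⟨t.1, hTA t.2⟩

/-- The representative of the coset of an element of the special subgroup. -/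
noncomputable def rep (x : GraphProduct.special Γ G {v}ᶜ) : T :=
  ⟨(hT x.1 x.2).choose, (hT x.1 x.2).choose_spec.1.1⟩

theorem rep_spec (x : GraphProduct.special Γ G {v}ᶜ) :
    ((rep Γ G v hT x : GraphProduct Γ G))⁻¹ * x.1 ∈
      GraphProduct.special Γ G (Γ.neighborSet v) :=
  (hT x.1 x.2).choose_spec.1.2

theorem rep_eq (x : GraphProduct.special Γ G {v}ᶜ) (t : T)
    (h : (t : GraphProduct Γ G)⁻¹ * x.1 ∈ GraphProduct.special Γ G (Γ.neighborSet v)) :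
    rep Γ G v hT x = t :=
  Subtype.ext (((hT x.1 x.2).choose_spec.2 t.1 ⟨t.2, h⟩)).symm

theorem rep_mul_tS (a : GraphProduct.special Γ G {v}ᶜ) (t₁ t₂ : T)
    (hc : (t₂ : GraphProduct Γ G)⁻¹ * (a.1 * t₁.1) ∈
      GraphProduct.special Γ G (Γ.neighborSet v)) :
    rep Γ G v hT (a * tS Γ G v hTA t₁) = t₂ := by
  refine rep_eq Γ G v hT _ t₂ ?_
  simpa [tS] using hc

/-- The permutation action of the special subgroup on the transversal. -/
noncomputable def sigma : GraphProduct.special Γ G {v}ᶜ →* Equiv.Perm T where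
  toFun a :=
    { toFun := fun t => rep Γ G v hT (a * tS Γ G v hTA t)
      invFun := fun t => rep Γ G v hT (a⁻¹ * tS Γ G v hTA t)
      left_inv := by
        intro t
        refine rep_eq Γ G v hT _ t ?_
        have h1 := rep_spec Γ G v hT (a * tS Γ G v hTA t)
        set t' := rep Γ G v hT (a * tS Γ G v hTA t) with ht'
        have : (t : GraphProduct Γ G)⁻¹ * ((a⁻¹ : _) * (tS Γ G v hTA t' : _) : _).1 =
            ((t' : GraphProduct Γ G)⁻¹ * ((a : _) * (tS Γ G v hTA t : _) : _).1)⁻¹ := by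
          simp only [tS, Subgroup.coe_mul, InvMemClass.coe_inv]
          group
        rw [this]
        exact inv_mem h1
      right_inv := by
        intro t
        refine rep_eq Γ G v hT _ t ?_
        have h1 := rep_spec Γ G v hT (a⁻¹ * tS Γ G v hTA t)
        set t' := rep Γ G v hT (a⁻¹ * tS Γ G v hTA t) with ht'
        have : (t : GraphProduct Γ G)⁻¹ * ((a : _) * (tS Γ G v hTA t' : _) : _).1 =
            ((t' : GraphProduct Γ G)⁻¹ * ((a⁻¹ : _) * (tS Γ G v hTA t : _) : _).1)⁻¹ := by
          simp only [tS, Subgroup.coe_mul, InvMemClass.coe_inv]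
          group
        rw [this]
        exact inv_mem h1 }
  map_one' := by
    ext t
    show ((rep Γ G v hT _ : T) : GraphProduct Γ G) = _
    have h : rep Γ G v hT ((1 : GraphProduct.special Γ G {v}ᶜ) * tS Γ G v hTA t) = t := by
      refine rep_eq Γ G v hT _ t ?_
      simp only [tS, Subgroup.coe_mul, OneMemClass.coe_one, one_mul, inv_mul_cancel]
      exact one_mem _
    simpa using congrArg Subtype.val h
  map_mul' a b := by
    ext t
    simp only [Equiv.coe_fn_mk, Equiv.Perm.mul_apply]
    set t₁ := rep Γ G v hT (b * tS Γ G v hTA t) with ht₁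
    have h₁ := rep_spec Γ G v hT (b * tS Γ G v hTA t)
    have h₂ := rep_spec Γ G v hT (a * tS Γ G v hTA t₁)
    set t₂ := rep Γ G v hT (a * tS Γ G v hTA t₁) with ht₂
    refine congrArg Subtype.val (rep_eq Γ G v hT _ t₂ ?_)
    have key : (t₂ : GraphProduct Γ G)⁻¹ * ((a * b : _) * (tS Γ G v hTA t : _) : _).1 =
        ((t₂ : GraphProduct Γ G)⁻¹ * ((a : _) * (tS Γ G v hTA t₁ : _) : _).1) *
          ((t₁ : GraphProduct Γ G)⁻¹ * ((b : _) * (tS Γ G v hTA t : _) : _).1) := by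
      simp only [tS, Subgroup.coe_mul, InvMemClass.coe_inv]
      group
    rw [key]
    exact mul_mem h₂ h₁

end Transversal

end GPAux

namespace GPAux

open Monoid

/-- Permuting the factors of a free product of copies of a fixed group. -/
def permHom {ι : Type*} (H : Type*) [Group H] (e : Equiv.Perm ι) :
    CoprodI (fun _ : ι => H) →* CoprodI (fun _ : ι => H) :=
  CoprodI.lift fun i => CoprodI.of (M := fun _ : ι => H) (i := e i)

@[simp] theorem permHom_of {ι : Type*} (H : Type*) [Group H] (e : Equiv.Perm ι)
    {i : ι} (x : H) :
    permHom H e (CoprodI.of (M := fun _ : ι => H) (i := i) x) =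
      CoprodI.of (M := fun _ : ι => H) (i := e i) x :=
  CoprodI.lift_of _ _

theorem permHom_comp {ι : Type*} (H : Type*) [Group H] (e f : Equiv.Perm ι) :
    (permHom H e).comp (permHom H f) = permHom H (e * f) := by
  apply CoprodI.ext_hom
  intro i
  ext x
  simp

/-- The action of permutations of the index set on a free product of copies of a
fixed group. -/
def permAut {ι : Type*} (H : Type*) [Group H] :
    Equiv.Perm ι →* MulAut (CoprodI (fun _ : ι => H)) where
  toFun e := MonoidHom.toMulEquiv (permHom H e) (permHom H e⁻¹)
    (by rw [permHom_comp]; simp [permHom])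
    (by rw [permHom_comp]; simp [permHom])
  map_one' := by
    ext x
    show permHom H 1 x = x
    simp [permHom]
  map_mul' e f := by
    ext x
    show permHom H (e * f) x = permHom H e (permHom H f x)
    rw [← permHom_comp]
    rfl

@[simp] theorem permAut_apply_of {ι : Type*} (H : Type*) [Group H] (e : Equiv.Perm ι)
    {i : ι} (x : H) :
    permAut H e (CoprodI.of (M := fun _ : ι => H) (i := i) x) =
      CoprodI.of (M := fun _ : ι => H) (i := e i) x :=
  permHom_of H e x

section Big

variable {V : Type*} (Γ : SimpleGraph V) (G : V → Type*) [∀ v, Group (G v)] (v : V)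
variable {T : Set (GraphProduct Γ G)}
variable (hT : ∀ g ∈ GraphProduct.special Γ G {v}ᶜ,
      ∃! t, t ∈ T ∧ t⁻¹ * g ∈ GraphProduct.special Γ G (Γ.neighborSet v))
variable (hTA : T ⊆ GraphProduct.special Γ G {v}ᶜ)

/-- The representative of the trivial coset. -/
noncomputable def t0 : T := rep Γ G v hT 1

theorem t0_mem_link : ((t0 Γ G v hT : T) : GraphProduct Γ G) ∈
    GraphProduct.special Γ G (Γ.neighborSet v) := by
  have h := rep_spec Γ G v hT 1
  simpa [t0] using inv_mem h

/-- The action of the special subgroup on the free product of copies of the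
vertex group indexed by the transversal. -/
noncomputable def phi0 : GraphProduct.special Γ G {v}ᶜ →*
    MulAut (CoprodI (fun _ : T => G v)) :=
  (permAut (G v)).comp (sigma Γ G v hT hTA)

@[simp] theorem phi0_of (a : GraphProduct.special Γ G {v}ᶜ) (t : T) (x : G v) :
    phi0 Γ G v hT hTA a (CoprodI.of (M := fun _ : T => G v) (i := t) x) =
      CoprodI.of (M := fun _ : T => G v) (i := sigma Γ G v hT hTA a t) x := by
  simp [phi0]

/-- Inclusion of a vertex group into the special subgroup avoiding `v`. -/
def toSA (u : V) (h : u ≠ v) : G u →* GraphProduct.special Γ G {v}ᶜ :=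
  (GraphProduct.of (Γ := Γ)).codRestrict _ (fun x => of_mem_special Γ G h x)

theorem sigma_fix (s : GraphProduct.special Γ G {v}ᶜ)
    (hs : s.1 ∈ GraphProduct.special Γ G (Γ.neighborSet v)) (t : T)
    (ht : (t : GraphProduct Γ G) ∈ GraphProduct.special Γ G (Γ.neighborSet v)) :
    sigma Γ G v hT hTA s t = t := by
  show rep Γ G v hT _ = t
  refine rep_eq Γ G v hT _ t ?_
  have : (t : GraphProduct Γ G)⁻¹ * ((s * tS Γ G v hTA t : _) : _).1 =
      (t : GraphProduct Γ G)⁻¹ * (s.1 * t) := by simp [tS]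
  rw [this]
  exact mul_mem (inv_mem ht) (mul_mem hs ht)

theorem sigma_tS (t : T) :
    sigma Γ G v hT hTA (tS Γ G v hTA t) (t0 Γ G v hT) = t := by
  show rep Γ G v hT _ = t
  refine rep_eq Γ G v hT _ t ?_
  have : (t : GraphProduct Γ G)⁻¹ *
      ((tS Γ G v hTA t * tS Γ G v hTA (t0 Γ G v hT) : _) : _).1 =
      ((t0 Γ G v hT : T) : GraphProduct Γ G) := by
    simp [tS, mul_assoc]
  rw [this]
  exact t0_mem_link Γ G v hT

open SemidirectProduct in
/-- The homomorphism from the graph product to the semidirect product. -/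
noncomputable def bigPhi : GraphProduct Γ G →*
    (CoprodI (fun _ : T => G v)) ⋊[phi0 Γ G v hT hTA] GraphProduct.special Γ G {v}ᶜ := by
  classical
  refine lift Γ G
    (fun u => if h : u = v then
        inl.comp ((CoprodI.of (M := fun _ : T => G v) (i := t0 Γ G v hT)).comp (castHom G h))
      else inr.comp (toSA Γ G v u h)) ?_
  intro u w hadj a b
  by_cases hu : u = v <;> by_cases hw : w = v
  · exact absurd (hu.trans hw.symm) hadj.ne
  · subst hu
    beta_reduce
    rw [dif_pos rfl, dif_neg hw]
    simp only [MonoidHom.comp_apply, castHom_rfl, MonoidHom.id_apply]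
    have hfix : phi0 Γ G u hT hTA (toSA Γ G u w hw b)
        (CoprodI.of (M := fun _ : T => G u) (i := t0 Γ G u hT) a) =
        CoprodI.of (M := fun _ : T => G u) (i := t0 Γ G u hT) a := by
      rw [phi0_of, sigma_fix]
      · exact of_mem_special Γ G (by simpa using hadj) b
      · exact t0_mem_link Γ G u hT
    have h1 := inl_aut (φ := phi0 Γ G u hT hTA) (toSA Γ G u w hw b)
      (CoprodI.of (M := fun _ : T => G u) (i := t0 Γ G u hT) a)
    rw [hfix] at h1
    show Commute _ _
    rw [Commute, SemiconjBy]
    conv_lhs => rw [h1]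
    rw [mul_assoc, ← map_mul, inv_mul_cancel, map_one, mul_one]
  · subst hw
    beta_reduce
    rw [dif_pos rfl, dif_neg hu]
    simp only [MonoidHom.comp_apply, castHom_rfl, MonoidHom.id_apply]
    have hfix : phi0 Γ G w hT hTA (toSA Γ G w u hu a)
        (CoprodI.of (M := fun _ : T => G w) (i := t0 Γ G w hT) b) =
        CoprodI.of (M := fun _ : T => G w) (i := t0 Γ G w hT) b := by
      rw [phi0_of, sigma_fix]
      · exact of_mem_special Γ G (by simpa using hadj.symm) a
      · exact t0_mem_link Γ G w hT
    have h1 := inl_aut (φ := phi0 Γ G w hT hTA) (toSA Γ G w u hu a)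
      (CoprodI.of (M := fun _ : T => G w) (i := t0 Γ G w hT) b)
    rw [hfix] at h1
    show Commute _ _
    rw [Commute, SemiconjBy]
    conv_rhs => rw [h1]
    rw [mul_assoc, ← map_mul, inv_mul_cancel, map_one, mul_one]
  · beta_reduce
    rw [dif_neg hu, dif_neg hw]
    simp only [MonoidHom.comp_apply]
    have : Commute (toSA Γ G v u hu a) (toSA Γ G v w hw b) := by
      have := commute_of_adj Γ G hadj a b
      exact Subtype.ext this
    exact (this.map inr)

theorem sigma_apply (a : GraphProduct.special Γ G {v}ᶜ) (t : T) :
    sigma Γ G v hT hTA a t = rep Γ G v hT (a * tS Γ G v hTA t) := rfl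

/-- The free product of the conjugates of the vertex group maps to the graph product. -/
def fN : CoprodI (fun _ : T => G v) →* GraphProduct Γ G :=
  CoprodI.lift fun t =>
    (MulAut.conj ((t : T) : GraphProduct Γ G)).toMonoidHom.comp (GraphProduct.of (Γ := Γ))

@[simp] theorem fN_of (t : T) (x : G v) :
    fN Γ G v (CoprodI.of (M := fun _ : T => G v) (i := t) x) =
      (t : GraphProduct Γ G) * GraphProduct.of x * (t : GraphProduct Γ G)⁻¹ := by
  simp [fN, MulAut.conj]

theorem conj_sigma (s : GraphProduct.special Γ G {v}ᶜ) (t : T) (x : G v) :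
    ((sigma Γ G v hT hTA s t : T) : GraphProduct Γ G) * GraphProduct.of x *
        ((sigma Γ G v hT hTA s t : T) : GraphProduct Γ G)⁻¹ =
      (s : GraphProduct Γ G) * ((t : GraphProduct Γ G) * GraphProduct.of x *
        (t : GraphProduct Γ G)⁻¹) * (s : GraphProduct Γ G)⁻¹ := by
  set t' := sigma Γ G v hT hTA s t with ht'
  have hc : ((t' : T) : GraphProduct Γ G)⁻¹ * ((s : GraphProduct Γ G) * t) ∈
      GraphProduct.special Γ G (Γ.neighborSet v) := by
    have := rep_spec Γ G v hT (s * tS Γ G v hTA t)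
    rw [sigma_apply] at ht'
    rw [ht']
    simpa [tS] using this
  set c : GraphProduct Γ G := ((t' : T) : GraphProduct Γ G)⁻¹ * ((s : GraphProduct Γ G) * t)
    with hcdef
  have hst : (s : GraphProduct Γ G) * t = ((t' : T) : GraphProduct Γ G) * c := by
    rw [hcdef]; group
  have hcomm : Commute c (GraphProduct.of (Γ := Γ) x) := commute_special_link Γ G v hc x
  calc ((t' : T) : GraphProduct Γ G) * GraphProduct.of x * ((t' : T) : GraphProduct Γ G)⁻¹
      = ((t' : T) : GraphProduct Γ G) * (c * GraphProduct.of x * c⁻¹) *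
        ((t' : T) : GraphProduct Γ G)⁻¹ := by
        rw [hcomm.eq, mul_inv_cancel_right]
    _ = (((t' : T) : GraphProduct Γ G) * c) * GraphProduct.of x *
        (((t' : T) : GraphProduct Γ G) * c)⁻¹ := by group
    _ = ((s : GraphProduct Γ G) * (t : GraphProduct Γ G)) * GraphProduct.of x *
        ((s : GraphProduct Γ G) * (t : GraphProduct Γ G))⁻¹ := by rw [hst]
    _ = (s : GraphProduct Γ G) * ((t : GraphProduct Γ G) * GraphProduct.of x *
        (t : GraphProduct Γ G)⁻¹) * (s : GraphProduct Γ G)⁻¹ := by group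

open SemidirectProduct in
/-- The homomorphism from the semidirect product to the graph product. -/
noncomputable def bigPsi :
    (CoprodI (fun _ : T => G v)) ⋊[phi0 Γ G v hT hTA] GraphProduct.special Γ G {v}ᶜ →*
      GraphProduct Γ G :=
  SemidirectProduct.lift (fN Γ G v) (GraphProduct.special Γ G {v}ᶜ).subtype (by
    intro s
    apply CoprodI.ext_hom
    intro t
    ext x
    simp only [MonoidHom.comp_apply, MulEquiv.coe_toMonoidHom, phi0_of, fN_of,
      MulAut.conj_apply, Subgroup.coe_subtype]
    exact conj_sigma Γ G v hT hTA s t x)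

@[simp] theorem bigPsi_inl (n : CoprodI (fun _ : T => G v)) :
    bigPsi Γ G v hT hTA (SemidirectProduct.inl n) = fN Γ G v n := by
  simp [bigPsi]

@[simp] theorem bigPsi_inr (s : GraphProduct.special Γ G {v}ᶜ) :
    bigPsi Γ G v hT hTA (SemidirectProduct.inr s) = (s : GraphProduct Γ G) := by
  simp [bigPsi]

@[simp] theorem bigPhi_of_v (x : G v) :
    bigPhi Γ G v hT hTA (GraphProduct.of (Γ := Γ) x) =
      SemidirectProduct.inl (CoprodI.of (M := fun _ : T => G v) (i := t0 Γ G v hT) x) := by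
  simp only [bigPhi, lift_of, dif_pos rfl]
  simp

@[simp] theorem bigPhi_of_ne {u : V} (hu : u ≠ v) (x : G u) :
    bigPhi Γ G v hT hTA (GraphProduct.of (Γ := Γ) x) =
      SemidirectProduct.inr (toSA Γ G v u hu x) := by
  simp only [bigPhi, lift_of, dif_neg hu]
  simp

theorem bigPsi_comp_bigPhi :
    (bigPsi Γ G v hT hTA).comp (bigPhi Γ G v hT hTA) = MonoidHom.id _ := by
  apply hom_ext
  intro u x
  simp only [MonoidHom.comp_apply, MonoidHom.id_apply]
  by_cases hu : u = v
  · subst hu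
    rw [bigPhi_of_v, bigPsi_inl, fN_of]
    have hcomm : Commute (((t0 Γ G u hT : T) : GraphProduct Γ G)) (GraphProduct.of x) :=
      commute_special_link Γ G u (t0_mem_link Γ G u hT) x
    rw [hcomm.eq, mul_inv_cancel_right]
  · rw [bigPhi_of_ne Γ G v hT hTA hu, bigPsi_inr]
    rfl

theorem bigPhi_coe (x : GraphProduct.special Γ G {v}ᶜ) :
    bigPhi Γ G v hT hTA (x : GraphProduct Γ G) = SemidirectProduct.inr x := by
  obtain ⟨g, hg⟩ := x
  refine Subgroup.closure_induction
    (p := fun g hg => bigPhi Γ G v hT hTA g = SemidirectProduct.inr ⟨g, hg⟩) ?_ ?_ ?_ ?_ hg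
  · rintro y hy
    simp only [Set.mem_iUnion] at hy
    obtain ⟨u, hu, z, rfl⟩ := hy
    have hu' : u ≠ v := by simpa using hu
    rw [bigPhi_of_ne Γ G v hT hTA hu']
    rfl
  · simp only [map_one]
    rfl
  · intro a b ha hb ih1 ih2
    rw [map_mul, ih1, ih2, ← map_mul]
    rfl
  · intro a ha ih
    rw [map_inv, ih, ← map_inv]
    rfl

theorem bigPhi_comp_fN :
    (bigPhi Γ G v hT hTA).comp (fN Γ G v) = SemidirectProduct.inl := by
  apply CoprodI.ext_hom
  intro t
  refine MonoidHom.ext fun x => ?_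
  simp only [MonoidHom.comp_apply, fN_of]
  rw [map_mul, map_mul, map_inv]
  have h1 : bigPhi Γ G v hT hTA (t : GraphProduct Γ G) =
      SemidirectProduct.inr (tS Γ G v hTA t) := bigPhi_coe Γ G v hT hTA (tS Γ G v hTA t)
  rw [h1, bigPhi_of_v]
  rw [← map_inv, ← SemidirectProduct.inl_aut]
  rw [phi0_of, sigma_tS]

end Big

/-- Congruence of free products. -/
def coprodICongr {ι : Type*} {M N : ι → Type*} [∀ i, Monoid (M i)] [∀ i, Monoid (N i)]
    (e : ∀ i, M i ≃* N i) : CoprodI M ≃* CoprodI N :=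
  MonoidHom.toMulEquiv
    (CoprodI.lift fun i => CoprodI.of.comp (e i).toMonoidHom)
    (CoprodI.lift fun i => CoprodI.of.comp (e i).symm.toMonoidHom)
    (by apply CoprodI.ext_hom; intro i; ext x; simp)
    (by apply CoprodI.ext_hom; intro i; ext x; simp)

end GPAux

open GPAux Monoid

/-- For a vertex `v` and `A = VΓ∖{v}`, the canonical retraction
`ρ_A : G → G_A` gives a split short exact sequence `1 → K → G → G_A → 1`, whose
kernel `K` is isomorphic to the free product of the conjugates `g G_v g⁻¹` as `g`
ranges over a transversal `T` of `G_{link v}` in `G_A`; in particular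
`G ≅ K ⋊ G_A`. -/
theorem graphProduct_split_exact_sequence {V : Type*} (Γ : SimpleGraph V)
    (G : V → Type*) [∀ v, Group (G v)] (v : V)
    (ρ : GraphProduct Γ G →* GraphProduct.special Γ G {v}ᶜ)
    (hρA : ∀ u : V, u ≠ v → ∀ g : G u,
      (ρ (GraphProduct.of g) : GraphProduct Γ G) = GraphProduct.of g)
    (hρv : ∀ g : G v, ρ (GraphProduct.of g) = 1)
    (T : Set (GraphProduct Γ G))
    (hTA : T ⊆ GraphProduct.special Γ G {v}ᶜ)
    (hT : ∀ g ∈ GraphProduct.special Γ G {v}ᶜ,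
      ∃! t, t ∈ T ∧ t⁻¹ * g ∈ GraphProduct.special Γ G (Γ.neighborSet v)) :
    Function.Surjective ρ ∧
    (∀ x : GraphProduct.special Γ G {v}ᶜ, ρ ↑x = x) ∧
    Nonempty (ρ.ker ≃* Monoid.CoprodI (fun t : T =>
      Subgroup.map (MulAut.conj (t : GraphProduct Γ G)).toMonoidHom
        (MonoidHom.range (GraphProduct.of (Γ := Γ) (G := G) (v := v))))) ∧
    ∃ φ : GraphProduct.special Γ G {v}ᶜ →* MulAut ρ.ker,
      Nonempty (GraphProduct Γ G ≃* ρ.ker ⋊[φ] GraphProduct.special Γ G {v}ᶜ) := by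
  -- `ρ` restricts to the identity on the special subgroup
  have hfix : ∀ x : GraphProduct.special Γ G {v}ᶜ, ρ ↑x = x := by
    rintro ⟨g, hg⟩
    refine Subgroup.closure_induction
      (p := fun g hg => ρ g = ⟨g, hg⟩) ?_ ?_ ?_ ?_ hg
    · rintro y hy
      simp only [Set.mem_iUnion] at hy
      obtain ⟨u, hu, z, rfl⟩ := hy
      have hu' : u ≠ v := by simpa using hu
      exact Subtype.ext (hρA u hu' z)
    · simp only [map_one]; rfl
    · intro a b ha hb ih1 ih2
      rw [map_mul, ih1, ih2]; rfl
    · intro a ha ih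
      rw [map_inv, ih]; rfl
  have hsurj : Function.Surjective ρ := fun x => ⟨↑x, hfix x⟩
  refine ⟨hsurj, hfix, ?_, ?_⟩
  · -- the kernel is a free product of conjugates
    set Φ := bigPhi Γ G v hT hTA with hΦ
    have hcomp : SemidirectProduct.rightHom.comp Φ = ρ := by
      apply hom_ext
      intro u x
      by_cases hu : u = v
      · subst hu
        rw [MonoidHom.comp_apply, hΦ, bigPhi_of_v, SemidirectProduct.rightHom_inl, hρv x]
      · rw [MonoidHom.comp_apply, hΦ, bigPhi_of_ne Γ G v hT hTA hu,
          SemidirectProduct.rightHom_inr]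
        exact Subtype.ext (hρA u hu x).symm
    have hright : ∀ g : GraphProduct Γ G, (Φ g).right = ρ g := fun g =>
      DFunLike.congr_fun hcomp g
    have hPsiPhi := bigPsi_comp_bigPhi Γ G v hT hTA
    have hPhifN := bigPhi_comp_fN Γ G v hT hTA
    have hker_right : ∀ x : ρ.ker, (Φ ↑x).right = 1 := by
      intro x
      rw [hright, MonoidHom.mem_ker.1 x.2]
    have hker_inl : ∀ x : ρ.ker, Φ ↑x = SemidirectProduct.inl ((Φ ↑x).left) := by
      intro x
      refine SemidirectProduct.ext ?_ ?_
      · rfl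
      · rw [hker_right]; rfl
    have e1 : ρ.ker ≃* CoprodI (fun _ : T => G v) :=
      { toFun := fun x => (Φ ↑x).left
        invFun := fun n => ⟨fN Γ G v n, by
          rw [MonoidHom.mem_ker, ← hcomp, MonoidHom.comp_apply,
            show Φ (fN Γ G v n) = SemidirectProduct.inl n from DFunLike.congr_fun hPhifN n,
            SemidirectProduct.rightHom_inl]⟩
        left_inv := fun x => by
          refine Subtype.ext ?_
          show fN Γ G v ((Φ ↑x).left) = ↑x
          have h2 : bigPsi Γ G v hT hTA (SemidirectProduct.inl ((Φ ↑x).left)) =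
              fN Γ G v ((Φ ↑x).left) := bigPsi_inl Γ G v hT hTA _
          rw [← h2, ← hker_inl x]
          exact DFunLike.congr_fun hPsiPhi (↑x : GraphProduct Γ G)
        right_inv := fun n => by
          show (Φ (fN Γ G v n)).left = n
          rw [show Φ (fN Γ G v n) = SemidirectProduct.inl n from DFunLike.congr_fun hPhifN n]
          rfl
        map_mul' := fun x y => by
          show (Φ ↑(x * y)).left = _
          rw [Subgroup.coe_mul, map_mul, SemidirectProduct.mul_left, hker_right x,
            map_one]
          rfl }
    have e2 : CoprodI (fun _ : T => G v) ≃* CoprodI (fun t : T =>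
        Subgroup.map (MulAut.conj (t : GraphProduct Γ G)).toMonoidHom
          (MonoidHom.range (GraphProduct.of (Γ := Γ) (G := G) (v := v)))) :=
      coprodICongr (fun t =>
        (MonoidHom.ofInjective (of_injective Γ G v)).trans
          (Subgroup.equivMapOfInjective _ _ (MulAut.conj (t : GraphProduct Γ G)).injective))
    exact ⟨e1.trans e2⟩
  · -- the semidirect product decomposition
    refine ⟨(MulAut.conjNormal (H := ρ.ker)).comp (GraphProduct.special Γ G {v}ᶜ).subtype, ?_⟩
    set φ := (MulAut.conjNormal (H := ρ.ker)).comp (GraphProduct.special Γ G {v}ᶜ).subtype with hφdef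
    have hcompat : ∀ s : GraphProduct.special Γ G {v}ᶜ,
        ρ.ker.subtype.comp (φ s).toMonoidHom =
          (MulAut.conj ((GraphProduct.special Γ G {v}ᶜ).subtype s)).toMonoidHom.comp
            ρ.ker.subtype := by
      intro s
      ext k
      simp [hφdef]
    set F := SemidirectProduct.lift ρ.ker.subtype
      (GraphProduct.special Γ G {v}ᶜ).subtype hcompat with hF
    have hFinl : ∀ n : ρ.ker, F (SemidirectProduct.inl n) = ↑n := fun n => by
      simp [hF]
    have hFinr : ∀ s : GraphProduct.special Γ G {v}ᶜ,
        F (SemidirectProduct.inr s) = ↑s := fun s => by simp [hF]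
    have hinj : Function.Injective F := by
      refine (injective_iff_map_eq_one F).2 ?_
      intro a ha
      rw [← SemidirectProduct.inl_left_mul_inr_right a, map_mul, hFinl, hFinr] at ha
      have hr : a.right = 1 := by
        have h1 : ρ ((a.left : GraphProduct Γ G) * ↑a.right) = ρ 1 := by rw [ha]
        rw [map_mul, MonoidHom.mem_ker.1 a.left.2, one_mul, hfix, map_one] at h1
        exact h1
      have hl : a.left = 1 := by
        rw [hr] at ha
        refine Subtype.ext ?_
        simpa using ha
      refine SemidirectProduct.ext ?_ ?_ <;> simp [hl, hr]
    have hsurjF : Function.Surjective F := by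
      intro g
      have hk : g * (↑(ρ g))⁻¹ ∈ ρ.ker := by
        rw [MonoidHom.mem_ker, map_mul, map_inv, hfix, mul_inv_cancel]
      refine ⟨SemidirectProduct.inl ⟨g * (↑(ρ g))⁻¹, hk⟩ * SemidirectProduct.inr (ρ g), ?_⟩
      rw [map_mul, hFinl, hFinr]
      exact inv_mul_cancel_right g _
    exact ⟨(MulEquiv.ofBijective F ⟨hinj, hsurjF⟩).symm⟩
end

section
/- Let Γ be a finite irreducible simplicial graph with |VΓ| ≥ 2 and {G_v} a collection of non-trivial groups. Then the graph product G = ΓG contains a quasi-isometrically embedded non-abelian free group of rank 2, unless G is the infinite dihedral group ℤ/2 * ℤ/2. -/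
set_option linter.unusedSectionVars false
set_option maxHeartbeats 1000000

open scoped commutatorElement


/-- Word length of a group element with respect to a set `S` (letters from `S ∪ S⁻¹`). -/
noncomputable def wordLength {G : Type*} [Group G] (S : Set G) (g : G) : ℕ :=
  sInf {n | ∃ w : List G, w.length = n ∧ (∀ x ∈ w, x ∈ S ∨ x⁻¹ ∈ S) ∧ w.prod = g}

/-- A simplicial graph is irreducible if its vertex set admits no partition into two
non-empty sets `A`, `B` such that every vertex of `A` is adjacent to every vertex
of `B`. -/
def SimpleGraph.Irreducible {V : Type*} (Γ : SimpleGraph V) : Prop :=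
  ¬∃ A B : Set V, A.Nonempty ∧ B.Nonempty ∧ A ∪ B = Set.univ ∧ A ∩ B = ∅ ∧
    ∀ a ∈ A, ∀ b ∈ B, Γ.Adj a b


open Monoid Monoid.CoprodI

namespace GPQI

section Syl

variable {ι : Type*} [DecidableEq ι] {M : ι → Type*} [∀ i, Group (M i)]
  [∀ i, DecidableEq (M i)]

/-- Product of a list of letters in the free product. -/
def prodList (l : List (Σ i, M i)) : CoprodI M :=
  (l.map fun x => of x.2).prod

/-- A list of letters is a valid normal form. -/
def Ok (l : List (Σ i, M i)) : Prop :=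
  (∀ x ∈ l, x.2 ≠ 1) ∧ l.Chain' (fun x y => x.1 ≠ y.1)

/-- Syllable length of an element of a free product. -/
noncomputable def syl (g : CoprodI M) : ℕ := (Word.equiv g).toList.length

lemma prodList_nil : prodList ([] : List (Σ i, M i)) = 1 := rfl

lemma prodList_cons (x : Σ i, M i) (l : List (Σ i, M i)) :
    prodList (x :: l) = of x.2 * prodList l := by
  simp [prodList]

lemma prodList_append (l₁ l₂ : List (Σ i, M i)) :
    prodList (l₁ ++ l₂) = prodList l₁ * prodList l₂ := by
  simp [prodList]

lemma syl_prodList {l : List (Σ i, M i)} (h : Ok l) : syl (prodList l) = l.length := by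
  have h1 : prodList l = Word.prod ⟨l, h.1, h.2⟩ := rfl
  have h2 : Word.prod (⟨l, h.1, h.2⟩ : Word M) = Word.equiv.symm ⟨l, h.1, h.2⟩ := rfl
  rw [syl, h1, h2, Equiv.apply_symm_apply]

lemma syl_one : syl (1 : CoprodI M) = 0 := by
  have : (1 : CoprodI M) = prodList [] := rfl
  rw [this, syl_prodList ⟨by simp, List.isChain_nil⟩]
  rfl

lemma ne_one_of_syl_pos {g : CoprodI M} (h : 0 < syl g) : g ≠ 1 := by
  intro hg
  rw [hg, syl_one] at h
  exact Nat.lt_irrefl 0 h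

lemma exists_ok_eq (g : CoprodI M) : ∃ l, Ok l ∧ prodList l = g ∧ l.length = syl g := by
  refine ⟨(Word.equiv g).toList, ⟨(Word.equiv g).ne_one, (Word.equiv g).chain_ne⟩, ?_, rfl⟩
  have : prodList (Word.equiv g).toList = Word.prod (Word.equiv g) := rfl
  rw [this]
  exact Word.equiv.symm_apply_apply g

lemma syl_of_mul_le (i : ι) (m : M i) (g : CoprodI M) :
    syl (of m * g) ≤ 1 + syl g := by
  obtain ⟨l, hOk, hl, hlen⟩ := exists_ok_eq g
  by_cases hm : m = 1
  · simp [hm]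
  cases l with
  | nil =>
    have hg : g = 1 := by rw [← hl]; rfl
    have h1 : of m * g = prodList [⟨i, m⟩] := by
      rw [hg, prodList_cons, prodList_nil]
    rw [h1, syl_prodList ⟨by simpa using hm, List.isChain_singleton _⟩]
    simp [← hlen]
  | cons x rest =>
    obtain ⟨j, mj⟩ := x
    have hx1 : mj ≠ 1 := hOk.1 ⟨j, mj⟩ List.mem_cons_self
    have hrest1 : ∀ y ∈ rest, y.2 ≠ 1 := fun y hy => hOk.1 y (by simp [hy])
    have hchain : rest.Chain' (fun x y => x.1 ≠ y.1) := hOk.2.tail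
    have hlen' : (⟨j, mj⟩ :: rest).length = syl g := hlen
    by_cases hij : i = j
    · subst hij
      by_cases hc : m * mj = 1
      · have h1 : of m * g = prodList rest := by
          rw [← hl, prodList_cons, ← mul_assoc, ← MonoidHom.map_mul, hc, map_one, one_mul]
        rw [h1, syl_prodList ⟨hrest1, hchain⟩, ← hlen']
        simp only [List.length_cons]
        omega
      · have hOk2 : Ok (⟨i, m * mj⟩ :: rest) := by
          refine ⟨?_, ?_⟩
          · intro y hy
            rcases List.mem_cons.mp hy with h | h
            · subst h; exact hc
            · exact hrest1 y h
          · rcases List.isChain_cons.mp hOk.2 with ⟨hh, _⟩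
            exact List.isChain_cons.mpr ⟨hh, hchain⟩
        have h1 : of m * g = prodList (⟨i, m * mj⟩ :: rest) := by
          rw [← hl, prodList_cons, prodList_cons, ← mul_assoc, ← MonoidHom.map_mul]
        rw [h1, syl_prodList hOk2, ← hlen']
        simp only [List.length_cons]
        omega
    · have hOk2 : Ok (⟨i, m⟩ :: ⟨j, mj⟩ :: rest) := by
        refine ⟨?_, ?_⟩
        · intro y hy
          rcases List.mem_cons.mp hy with h | h
          · subst h; exact hm
          · exact hOk.1 y h
        · exact List.isChain_cons.mpr ⟨by simpa using fun h => hij h, hOk.2⟩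
      have h1 : of m * g = prodList (⟨i, m⟩ :: ⟨j, mj⟩ :: rest) := by
        rw [← hl, prodList_cons, prodList_cons, prodList_cons]
      rw [h1, syl_prodList hOk2, ← hlen']
      simp only [List.length_cons]
      omega

lemma syl_list_prod_le (L : List (CoprodI M))
    (hL : ∀ x ∈ L, ∃ (i : ι) (m : M i), x = of m) :
    syl L.prod ≤ L.length := by
  induction L with
  | nil => simp [syl_one]
  | cons x rest ih =>
    obtain ⟨i, m, rfl⟩ := hL x (by simp)
    rw [List.prod_cons]
    calc syl (of m * rest.prod) ≤ 1 + syl rest.prod := syl_of_mul_le _ _ _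
    _ ≤ 1 + rest.length := by
        have := ih (fun y hy => hL y (by simp [hy]))
        omega
    _ = (of m :: rest).length := by simp [add_comm]

end Syl

section Core

variable {M : Bool → Type*} [∀ t, Group (M t)] [∀ t, DecidableEq (M t)]
variable (a : Fin 2 → M true) (b : M false)

/-- images of the two free generators -/
def gen (i : Fin 2) : CoprodI M := of (a i) * of b * (of (a i))⁻¹ * (of b)⁻¹

/-- image of a signed letter -/
def val (g : Fin 2 × Bool) : CoprodI M := cond g.2 (gen a b g.1) (gen a b g.1)⁻¹

/-- normal form of the image of a signed letter -/
def letterWord (g : Fin 2 × Bool) : List (Σ t, M t) :=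
  cond g.2
    [⟨true, a g.1⟩, ⟨false, b⟩, ⟨true, (a g.1)⁻¹⟩, ⟨false, b⁻¹⟩]
    [⟨false, b⟩, ⟨true, a g.1⟩, ⟨false, b⁻¹⟩, ⟨true, (a g.1)⁻¹⟩]

lemma prodList_letterWord (g : Fin 2 × Bool) :
    prodList (letterWord a b g) = val a b g := by
  obtain ⟨i, s⟩ := g
  cases s <;>
    simp [letterWord, val, gen, prodList, mul_assoc, mul_inv_rev, map_inv]

/-- no adjacent inverse pairs -/
def Red2 (L : List (Fin 2 × Bool)) : Prop :=
  L.Chain' (fun p q => ¬(p.1 = q.1 ∧ q.2 = !p.2))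

lemma ok_cons {x : Σ t, M t} {l : List (Σ t, M t)} (hx : x.2 ≠ 1)
    (hxl : ∀ y ∈ l.head?, x.1 ≠ y.1) (h : Ok l) : Ok (x :: l) := by
  refine ⟨?_, List.isChain_cons.mpr ⟨hxl, h.2⟩⟩
  intro y hy
  rcases List.mem_cons.mp hy with h' | h'
  · subst h'; exact hx
  · exact h.1 y h'

variable (ha : ∀ i, a i ≠ 1) (hb : b ≠ 1) (hinj : Function.Injective a)

include ha hb hinj in
lemma key (L : List (Fin 2 × Bool)) : ∀ (g : Fin 2 × Bool), Red2 (g :: L) →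
    ∃ rest : List (Σ t, M t),
      Ok ((letterWord a b g).take 2 ++ rest) ∧
      prodList ((letterWord a b g).take 2 ++ rest) = ((g :: L).map (val a b)).prod ∧
      (g :: L).length + 3 ≤ ((letterWord a b g).take 2 ++ rest).length := by
  induction L with
  | nil =>
    rintro ⟨i, s⟩ _
    refine ⟨(letterWord a b (i, s)).drop 2, ?_, ?_, ?_⟩
    · rw [List.take_append_drop]
      cases s <;>
        exact ⟨by simp [letterWord, ha i, hb, inv_ne_one], by simp [letterWord, List.Chain', List.isChain_cons_cons]⟩
    · rw [List.take_append_drop, prodList_letterWord]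
      simp
    · rw [List.take_append_drop]
      cases s <;> simp [letterWord]
  | cons h L' ih =>
    rintro ⟨i, s⟩ hred
    obtain ⟨j, t⟩ := h
    have hred' : Red2 ((j, t) :: L') := hred.tail
    have hgh : ¬(i = j ∧ t = !s) := (List.isChain_cons.mp hred).1 (j, t) rfl
    obtain ⟨rest, hOk, hprod, hlen⟩ := ih (j, t) hred'
    have hprod' : ((((i, s) :: (j, t) :: L')).map (val a b)).prod
        = val a b (i, s) * (((j, t) :: L').map (val a b)).prod := by
      simp
    cases s
    · -- s = false
      cases t
      · -- t = false : no cancellation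
        refine ⟨[⟨false, b⁻¹⟩, ⟨true, (a i)⁻¹⟩] ++ (letterWord a b (j, false)).take 2 ++ rest,
          ?_, ?_, ?_⟩
        · simp only [letterWord, cond] at hOk ⊢
          refine ok_cons (by simpa using hb) (by simp) ?_
          refine ok_cons (by simpa using ha i) (by simp) ?_
          refine ok_cons (by simpa using hb) (by simp) ?_
          exact ok_cons (by simpa using inv_ne_one.mpr (ha i)) (by simp) hOk
        · rw [hprod']
          rw [← hprod]
          simp only [letterWord, cond] at *
          simp only [val, gen, cond] at *
          simp [prodList, mul_assoc, mul_inv_rev, map_inv]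
        · simp only [List.length_append, List.length_cons] at hlen ⊢
          simp only [letterWord, cond, List.take, List.length] at hlen ⊢
          omega
      · -- t = true : merge
        have hij : i ≠ j := fun hij => hgh ⟨hij, rfl⟩
        have hmerge : (a i)⁻¹ * a j ≠ 1 := by
          rw [Ne, inv_mul_eq_one]
          exact fun h => hij (hinj h)
        -- W = [⟨true, a j⟩, ⟨false, b⟩] ++ rest
        simp only [letterWord, cond] at hOk hprod hlen
        have hrestOk : Ok rest :=
          ⟨fun y hy => hOk.1 y (by simp [hy]), (hOk.2.tail).tail⟩
        have hjunc : ∀ y ∈ rest.head?, false ≠ y.1 := by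
          have := (List.isChain_cons.mp (hOk.2.tail)).1
          simpa using this
        refine ⟨[⟨false, b⁻¹⟩, ⟨true, (a i)⁻¹ * a j⟩, ⟨false, b⟩] ++ rest, ?_, ?_, ?_⟩
        · simp only [letterWord, cond]
          refine ok_cons (by simpa using hb) (by simp) ?_
          refine ok_cons (by simpa using ha i) (by simp) ?_
          refine ok_cons (by simpa using hb) (by simp) ?_
          refine ok_cons (by simpa using hmerge) (by simp) ?_
          exact ok_cons (by simpa using hb) hjunc hrestOk
        · rw [hprod', ← hprod]
          simp only [letterWord, cond]
          simp only [val, gen, cond]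
          simp [prodList, mul_assoc, mul_inv_rev, map_inv, map_mul]
        · simp only [List.length_append, List.length_cons, letterWord, cond,
            List.take, List.length] at hlen ⊢
          omega
    · -- s = true
      cases t
      · -- t = false : cancel + merge
        have hij : i ≠ j := fun hij => hgh ⟨hij, rfl⟩
        have hmerge : (a i)⁻¹ * a j ≠ 1 := by
          rw [Ne, inv_mul_eq_one]
          exact fun h => hij (hinj h)
        -- W = [⟨false, b⟩, ⟨true, a j⟩] ++ rest
        simp only [letterWord, cond] at hOk hprod hlen
        have hrestOk : Ok rest :=
          ⟨fun y hy => hOk.1 y (by simp [hy]), (hOk.2.tail).tail⟩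
        have hjunc : ∀ y ∈ rest.head?, true ≠ y.1 := by
          have := (List.isChain_cons.mp (hOk.2.tail)).1
          simpa using this
        refine ⟨[⟨true, (a i)⁻¹ * a j⟩] ++ rest, ?_, ?_, ?_⟩
        · simp only [letterWord, cond]
          refine ok_cons (by simpa using ha i) (by simp) ?_
          refine ok_cons (by simpa using hb) (by simp) ?_
          exact ok_cons (by simpa using hmerge) hjunc hrestOk
        · rw [hprod', ← hprod]
          simp only [letterWord, cond]
          simp only [val, gen, cond]
          simp [prodList, mul_assoc, mul_inv_rev, map_inv, map_mul]
        · simp only [List.length_append, List.length_cons, letterWord, cond,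
            List.take, List.length] at hlen ⊢
          omega
      · -- t = true : no cancellation
        refine ⟨[⟨true, (a i)⁻¹⟩, ⟨false, b⁻¹⟩] ++ (letterWord a b (j, true)).take 2 ++ rest,
          ?_, ?_, ?_⟩
        · simp only [letterWord, cond] at hOk ⊢
          refine ok_cons (by simpa using ha i) (by simp) ?_
          refine ok_cons (by simpa using hb) (by simp) ?_
          refine ok_cons (by simpa using inv_ne_one.mpr (ha i)) (by simp) ?_
          exact ok_cons (by simpa using inv_ne_one.mpr hb) (by simp) hOk
        · rw [hprod', ← hprod]
          simp only [letterWord, cond] at *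
          simp only [val, gen, cond] at *
          simp [prodList, mul_assoc, mul_inv_rev, map_inv]
        · simp only [List.length_append, List.length_cons] at hlen ⊢
          simp only [letterWord, cond, List.take, List.length] at hlen ⊢
          omega


lemma red2_toWord (w : FreeGroup (Fin 2)) : Red2 w.toWord := by
  have h : ∀ (L : List (Fin 2 × Bool)),
      (∀ (l1 l2 : List (Fin 2 × Bool)) x c, L ≠ l1 ++ (x, c) :: (x, !c) :: l2) → Red2 L := by
    intro L
    induction L with
    | nil => intro _; exact List.isChain_nil
    | cons p L ih =>
      intro hL
      cases L with
      | nil => exact List.isChain_singleton _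
      | cons q L2 =>
        refine List.isChain_cons_cons.mpr ⟨?_, ih ?_⟩
        · rintro ⟨h1, h2⟩
          obtain ⟨x, c⟩ := p
          obtain ⟨y, d⟩ := q
          simp only at h1 h2
          subst h1
          subst h2
          exact hL [] L2 x c rfl
        · intro l1 l2 x c h
          exact hL (p :: l1) l2 x c (by rw [h]; rfl)
  apply h
  intro l1 l2 x c hEq
  refine FreeGroup.reduce.not (L₁ := w.toWord) (L₂ := l1) (L₃ := l2) (x := x) (b := c) ?_
  rw [FreeGroup.reduce_toWord]
  exact hEq

lemma lift_gen_eq (w : FreeGroup (Fin 2)) :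
    FreeGroup.lift (gen a b) w = ((w.toWord).map (val a b)).prod := by
  conv_lhs => rw [← FreeGroup.mk_toWord (x := w)]
  rw [FreeGroup.lift_mk]
  congr 1

include ha hb hinj in
lemma core_main (w : FreeGroup (Fin 2)) :
    w.toWord.length ≤ syl (FreeGroup.lift (gen a b) w) ∧
    (w ≠ 1 → FreeGroup.lift (gen a b) w ≠ 1) := by
  by_cases hw : w = 1
  · subst hw
    simp [FreeGroup.toWord_one]
  · have hL : w.toWord ≠ [] := fun h => hw (FreeGroup.toWord_eq_nil_iff.mp h)
    rcases hT : w.toWord with _ | ⟨g, L⟩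
    · exact absurd hT hL
    have hred : Red2 (g :: L) := by rw [← hT]; exact red2_toWord w
    obtain ⟨rest, hOk, hprod, hlen⟩ := key a b ha hb hinj L g hred
    have heq : FreeGroup.lift (gen a b) w
        = prodList ((letterWord a b g).take 2 ++ rest) := by
      rw [lift_gen_eq, hT, hprod]
    have hsyl : syl (FreeGroup.lift (gen a b) w)
        = ((letterWord a b g).take 2 ++ rest).length := by
      rw [heq, syl_prodList hOk]
    constructor
    · rw [hsyl]
      omega
    · intro _
      apply ne_one_of_syl_pos
      rw [hsyl]
      omega

end Core


section Build

universe uP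

/-- A two-member family of groups indexed by `Bool`. -/
def pairFam (A B : Type uP) : Bool → Type uP := fun t => Bool.rec A B t

instance pairFamGroup (A B : Type uP) [Group A] [Group B] : ∀ t, Group (pairFam A B t) :=
  fun t =>
  match t with
  | false => inferInstanceAs (Group A)
  | true => inferInstanceAs (Group B)


universe uV uG

variable {V : Type uV} {Γ : SimpleGraph V} {G : V → Type uG} [∀ v, Group (G v)]

lemma buildLeft (M : Bool → Type*) [∀ t, Group (M t)]
    (κ : ∀ p : V, G p →* CoprodI M)
    (hrel : ∀ p q, Γ.Adj p q → ∀ (x : G p) (y : G q), Commute (κ p x) (κ q y))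
    (hletter : ∀ (p : V) (x : G p), ∃ (t : Bool) (m : M t), κ p x = of m)
    (u v w : V) (α1 : G v) (α2 : G w) (β : G u)
    (a1 a2 : M true) (bb : M false)
    (hk1 : κ v α1 = of a1) (hk2 : κ w α2 = of a2) (hkb : κ u β = of bb)
    (h1 : a1 ≠ 1) (h2 : a2 ≠ 1) (h12 : a1 ≠ a2) (hbb : bb ≠ 1) :
    ∃ φ : FreeGroup (Fin 2) →* GraphProduct Γ G, Function.Injective φ ∧
      ∃ c : ℝ, 1 ≤ c ∧ ∃ C : ℝ, 0 ≤ C ∧ ∀ w : FreeGroup (Fin 2),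
        (wordLength (⋃ v : V, Set.range (GraphProduct.of (Γ := Γ) (G := G) (v := v)))
            (φ w) : ℝ) ≤ c * (wordLength (Set.range (FreeGroup.of (α := Fin 2))) w) + C ∧
        (1 / c) * (wordLength (Set.range (FreeGroup.of (α := Fin 2))) w) - C ≤
          (wordLength (⋃ v : V, Set.range (GraphProduct.of (Γ := Γ) (G := G) (v := v)))
            (φ w) : ℝ) := by
  classical
  letI : ∀ t : Bool, DecidableEq (M t) := fun t => Classical.decEq _
  set S : Set (GraphProduct Γ G) :=
    (⋃ p : V, Set.range (GraphProduct.of (Γ := Γ) (G := G) (v := p))) with hS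
  -- the retraction-like homomorphism
  have hker : GraphProductRels Γ G ⊆ (CoprodI.lift κ).ker := by
    rintro x ⟨p, q, xa, xb, hadj, rfl⟩
    have hc : Commute (κ p xa) (κ q xb) := hrel p q hadj xa xb
    rw [SetLike.mem_coe, MonoidHom.mem_ker, map_commutatorElement]
    simp only [CoprodI.lift_of]
    exact commutatorElement_eq_one_iff_commute.mpr hc
  have hN : Subgroup.normalClosure (GraphProductRels Γ G) ≤ (CoprodI.lift κ).ker :=
    Subgroup.normalClosure_le_normal hker
  let ρ : GraphProduct Γ G →* CoprodI M := QuotientGroup.lift _ (CoprodI.lift κ) hN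
  have hρof : ∀ (p : V) (x : G p), ρ (GraphProduct.of (v := p) x) = κ p x := by
    intro p x
    show ρ ((QuotientGroup.mk' _) (CoprodI.of x)) = _
    rw [QuotientGroup.mk'_apply, QuotientGroup.lift_mk, CoprodI.lift_of]
  -- the generators
  let a : Fin 2 → M true := ![a1, a2]
  have haa : ∀ i, a i ≠ 1 := by
    intro i
    fin_cases i
    · simpa [a] using h1
    · simpa [a] using h2
  have hainj : Function.Injective a := by
    intro i j hij
    fin_cases i <;> fin_cases j
    · rfl
    · exact absurd (by simpa [a] using hij) h12
    · exact absurd (by simpa [a] using hij.symm) h12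
    · rfl
  let X : Fin 2 → GraphProduct Γ G :=
    ![GraphProduct.of α1 * GraphProduct.of β *
        (GraphProduct.of α1)⁻¹ * (GraphProduct.of β)⁻¹,
      GraphProduct.of α2 * GraphProduct.of β *
        (GraphProduct.of α2)⁻¹ * (GraphProduct.of β)⁻¹]
  let φ : FreeGroup (Fin 2) →* GraphProduct Γ G := FreeGroup.lift X
  have hρX : ∀ i, ρ (X i) = gen a bb i := by
    intro i
    fin_cases i <;>
      simp [X, gen, a, map_mul, map_inv, hρof, hk1, hk2, hkb]
  have hcomp : ∀ w : FreeGroup (Fin 2), ρ (φ w) = FreeGroup.lift (gen a bb) w := by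
    have : ρ.comp φ = FreeGroup.lift (gen a bb) := by
      apply FreeGroup.ext_hom
      intro i
      simp only [MonoidHom.comp_apply]
      rw [show φ (FreeGroup.of i) = X i from FreeGroup.lift_apply_of]
      rw [hρX i]
      exact (FreeGroup.lift_apply_of).symm
    intro w
    rw [← this]
    rfl
  -- membership of letters
  have hSletters : ∀ (p : V) (x : G p), GraphProduct.of (v := p) x ∈ S :=
    fun p x => Set.mem_iUnion.mpr ⟨p, Set.mem_range_self x⟩
  -- expansion lists
  let E : Fin 2 → List (GraphProduct Γ G) :=
    ![[GraphProduct.of α1, GraphProduct.of β,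
        (GraphProduct.of α1)⁻¹, (GraphProduct.of β)⁻¹],
      [GraphProduct.of α2, GraphProduct.of β,
        (GraphProduct.of α2)⁻¹, (GraphProduct.of β)⁻¹]]
  have hEprod : ∀ i, (E i).prod = X i := by
    intro i
    fin_cases i <;> simp [E, X, mul_assoc]
  have hElen : ∀ i, (E i).length = 4 := by
    intro i
    fin_cases i <;> simp [E]
  have hEmem1 : ∀ (p : V) (z : G p) (x : GraphProduct Γ G),
      x ∈ [GraphProduct.of (v := p) z, GraphProduct.of β,
        (GraphProduct.of (v := p) z)⁻¹, (GraphProduct.of β)⁻¹] → x ∈ S ∨ x⁻¹ ∈ S := by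
    intro p z x hx
    simp only [List.mem_cons, List.not_mem_nil, or_false] at hx
    rcases hx with rfl | rfl | rfl | rfl
    · exact Or.inl (hSletters _ _)
    · exact Or.inl (hSletters _ _)
    · exact Or.inr (by rw [inv_inv]; exact hSletters _ _)
    · exact Or.inr (by rw [inv_inv]; exact hSletters _ _)
  have hEmem : ∀ i, ∀ x ∈ E i, x ∈ S ∨ x⁻¹ ∈ S := by
    intro i
    fin_cases i
    · exact hEmem1 v α1
    · exact hEmem1 w α2
  have hexpand : ∀ (Lf : List (FreeGroup (Fin 2))),
      (∀ x ∈ Lf, x ∈ Set.range (FreeGroup.of (α := Fin 2)) ∨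
        x⁻¹ ∈ Set.range (FreeGroup.of (α := Fin 2))) →
      ∃ LS : List (GraphProduct Γ G), LS.length = 4 * Lf.length ∧
        (∀ y ∈ LS, y ∈ S ∨ y⁻¹ ∈ S) ∧ LS.prod = φ Lf.prod := by
    intro Lf
    induction Lf with
    | nil => exact fun _ => ⟨[], by simp, by simp, by simp⟩
    | cons x rest ih =>
      intro hmem
      obtain ⟨LS, hlen, hm, hp⟩ := ih (fun y hy => hmem y (by simp [hy]))
      rcases hmem x (by simp) with ⟨i, rfl⟩ | ⟨i, hi⟩
      · refine ⟨E i ++ LS, by simp [hElen, hlen]; ring, ?_, ?_⟩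
        · intro y hy
          rcases List.mem_append.mp hy with h | h
          · exact hEmem i y h
          · exact hm y h
        · rw [List.prod_append, hEprod, hp, List.prod_cons, map_mul]
          congr 1
          exact (FreeGroup.lift_apply_of).symm
      · have hx : x = (FreeGroup.of i)⁻¹ := by rw [hi, inv_inv]
        subst hx
        refine ⟨((E i).map fun z => z⁻¹).reverse ++ LS, ?_, ?_, ?_⟩
        · simp [hElen, hlen]; ring
        · intro y hy
          rcases List.mem_append.mp hy with h | h
          · rw [List.mem_reverse, List.mem_map] at h
            obtain ⟨z, hz, rfl⟩ := h
            rcases hEmem i z hz with h' | h'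
            · exact Or.inr (by rw [inv_inv]; exact h')
            · exact Or.inl h'
          · exact hm y h
        · rw [List.prod_append, ← List.prod_inv_reverse, hEprod, hp,
            List.prod_cons, map_mul, map_inv]
          congr 2
          exact (FreeGroup.lift_apply_of).symm
  -- nonemptiness on the free group side
  have hF2wit : ∀ w : FreeGroup (Fin 2),
      ∃ L : List (FreeGroup (Fin 2)), L.length = w.toWord.length ∧
        (∀ x ∈ L, x ∈ Set.range (FreeGroup.of (α := Fin 2)) ∨
          x⁻¹ ∈ Set.range (FreeGroup.of (α := Fin 2))) ∧ L.prod = w := by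
    intro w
    refine ⟨w.toWord.map (fun p => cond p.2 (FreeGroup.of p.1) (FreeGroup.of p.1)⁻¹),
      by simp, ?_, ?_⟩
    · intro x hx
      obtain ⟨p, hp, rfl⟩ := List.mem_map.mp hx
      cases hp2 : p.2
      · right
        simp [hp2]
      · left
        simp [hp2]
    · have h0 : FreeGroup.lift FreeGroup.of (FreeGroup.mk w.toWord) =
          (w.toWord.map (fun p => cond p.2 (FreeGroup.of p.1) (FreeGroup.of p.1)⁻¹)).prod :=
        FreeGroup.lift_mk
      rw [← h0, FreeGroup.mk_toWord, FreeGroup.lift_of_eq_id]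
      rfl
  -- injectivity
  have hφinj : Function.Injective φ := by
    rw [injective_iff_map_eq_one]
    intro w hw1
    by_contra hw
    refine (core_main a bb haa hbb hainj w).2 hw ?_
    rw [← hcomp w, hw1, map_one]
  refine ⟨φ, hφinj, 4, by norm_num, 0, le_refl 0, fun w => ?_⟩
  -- upper bound
  obtain ⟨Lw, hLwlen, hLwmem, hLwprod⟩ := hF2wit w
  have hF2ne : {n | ∃ L : List (FreeGroup (Fin 2)), L.length = n ∧
      (∀ x ∈ L, x ∈ Set.range (FreeGroup.of (α := Fin 2)) ∨
        x⁻¹ ∈ Set.range (FreeGroup.of (α := Fin 2))) ∧ L.prod = w}.Nonempty :=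
    ⟨Lw.length, Lw, rfl, hLwmem, hLwprod⟩
  obtain ⟨L0, hL0len, hL0mem, hL0prod⟩ := Nat.sInf_mem hF2ne
  have hL0len' : L0.length = wordLength (Set.range (FreeGroup.of (α := Fin 2))) w := hL0len
  obtain ⟨LS, hLSlen, hLSmem, hLSprod⟩ := hexpand L0 hL0mem
  have hLSprod' : LS.prod = φ w := by rw [hLSprod, hL0prod]
  have hup : wordLength S (φ w) ≤
      4 * wordLength (Set.range (FreeGroup.of (α := Fin 2))) w := by
    have hle : wordLength S (φ w) ≤ LS.length :=
      Nat.sInf_le ⟨LS, rfl, hLSmem, hLSprod'⟩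
    rw [hLSlen, hL0len'] at hle
    exact hle
  -- lower bound
  have hlow : wordLength (Set.range (FreeGroup.of (α := Fin 2))) w ≤ wordLength S (φ w) := by
    have hSne : {n | ∃ L : List (GraphProduct Γ G), L.length = n ∧
        (∀ x ∈ L, x ∈ S ∨ x⁻¹ ∈ S) ∧ L.prod = φ w}.Nonempty :=
      ⟨LS.length, LS, rfl, hLSmem, hLSprod'⟩
    obtain ⟨L1, hL1len, hL1mem, hL1prod⟩ := Nat.sInf_mem hSne
    have hofform : ∀ x ∈ L1.map ρ, ∃ (t : Bool) (m : M t), x = of m := by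
      intro x hx
      obtain ⟨y, hy, rfl⟩ := List.mem_map.mp hx
      rcases hL1mem y hy with hmem | hmem
      · obtain ⟨p, hp⟩ := Set.mem_iUnion.mp hmem
        obtain ⟨z, rfl⟩ := hp
        obtain ⟨t, m, hm⟩ := hletter p z
        exact ⟨t, m, by rw [hρof, hm]⟩
      · obtain ⟨p, hp⟩ := Set.mem_iUnion.mp hmem
        obtain ⟨z, hz⟩ := hp
        have : y = (GraphProduct.of (v := p) z)⁻¹ := by rw [hz, inv_inv]
        subst this
        obtain ⟨t, m, hm⟩ := hletter p z
        exact ⟨t, m⁻¹, by rw [map_inv, hρof, hm, map_inv]⟩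
    have hsle : syl (ρ (φ w)) ≤ L1.length := by
      rw [← hL1prod, map_list_prod]
      simpa using syl_list_prod_le (L1.map ρ) hofform
    have hwle : w.toWord.length ≤ syl (ρ (φ w)) := by
      rw [hcomp w]
      exact (core_main a bb haa hbb hainj w).1
    have hF2le : wordLength (Set.range (FreeGroup.of (α := Fin 2))) w ≤ w.toWord.length :=
      Nat.sInf_le ⟨Lw, hLwlen, hLwmem, hLwprod⟩
    have : L1.length = wordLength S (φ w) := hL1len
    omega
  constructor
  · have := (Nat.cast_le (α := ℝ)).mpr hup
    push_cast at this ⊢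
    linarith
  · have := (Nat.cast_le (α := ℝ)).mpr hlow
    have hge : (0 : ℝ) ≤ (wordLength (Set.range (FreeGroup.of (α := Fin 2))) w : ℝ) := by positivity
    push_cast at this ⊢
    linarith


lemma caseA (u v : V) (hvu : v ≠ u)
    (hnoadj : ∀ p q : V, ¬Γ.Adj p q)
    (α1 α2 : G v) (β : G u) (hα1 : α1 ≠ 1) (hα2 : α2 ≠ 1) (h12 : α1 ≠ α2) (hβ : β ≠ 1) :
    ∃ φ : FreeGroup (Fin 2) →* GraphProduct Γ G, Function.Injective φ ∧
      ∃ c : ℝ, 1 ≤ c ∧ ∃ C : ℝ, 0 ≤ C ∧ ∀ w : FreeGroup (Fin 2),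
        (wordLength (⋃ v : V, Set.range (GraphProduct.of (Γ := Γ) (G := G) (v := v)))
            (φ w) : ℝ) ≤ c * (wordLength (Set.range (FreeGroup.of (α := Fin 2))) w) + C ∧
        (1 / c) * (wordLength (Set.range (FreeGroup.of (α := Fin 2))) w) - C ≤
          (wordLength (⋃ v : V, Set.range (GraphProduct.of (Γ := Γ) (G := G) (v := v)))
            (φ w) : ℝ) := by
  classical
  let M : Bool → Type uG := pairFam (G u) (G v)
  let fv : G v →* CoprodI M := CoprodI.of (M := M) (i := true)
  let fu : G u →* CoprodI M := CoprodI.of (M := M) (i := false)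
  let κ : ∀ p : V, G p →* CoprodI M := fun p =>
    if h : v = p then h ▸ fv else if h' : u = p then h' ▸ fu else 1
  have hκv : ∀ x : G v, κ v x = CoprodI.of (M := M) (i := true) x := by
    intro x
    simp only [κ, dif_pos rfl]
    rfl
  have hκu : ∀ x : G u, κ u x = CoprodI.of (M := M) (i := false) x := by
    intro x
    simp only [κ, dif_neg hvu, dif_pos rfl]
    rfl
  refine buildLeft M κ (fun p q hadj => absurd hadj (hnoadj p q)) ?_ u v v α1 α2 β
    α1 α2 β (hκv α1) (hκv α2) (hκu β) hα1 hα2 h12 hβ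
  intro p x
  by_cases h : v = p
  · subst h
    exact ⟨true, x, hκv x⟩
  · by_cases h' : u = p
    · subst h'
      exact ⟨false, x, hκu x⟩
    · refine ⟨true, 1, ?_⟩
      simp only [κ, dif_neg h, dif_neg h']
      simp

lemma caseB (u v w : V) (hvu : v ≠ u) (hwu : w ≠ u) (hvw : v ≠ w)
    (huv : ¬Γ.Adj u v) (huw : ¬Γ.Adj u w)
    (α1 : G v) (α2 : G w) (β : G u) (hα1 : α1 ≠ 1) (hα2 : α2 ≠ 1) (hβ : β ≠ 1) :
    ∃ φ : FreeGroup (Fin 2) →* GraphProduct Γ G, Function.Injective φ ∧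
      ∃ c : ℝ, 1 ≤ c ∧ ∃ C : ℝ, 0 ≤ C ∧ ∀ w : FreeGroup (Fin 2),
        (wordLength (⋃ v : V, Set.range (GraphProduct.of (Γ := Γ) (G := G) (v := v)))
            (φ w) : ℝ) ≤ c * (wordLength (Set.range (FreeGroup.of (α := Fin 2))) w) + C ∧
        (1 / c) * (wordLength (Set.range (FreeGroup.of (α := Fin 2))) w) - C ≤
          (wordLength (⋃ v : V, Set.range (GraphProduct.of (Γ := Γ) (G := G) (v := v)))
            (φ w) : ℝ) := by
  classical
  let M : Bool → Type uG := pairFam (G u) (G v × G w)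
  let fv : G v →* CoprodI M :=
    (CoprodI.of (M := M) (i := true)).comp (MonoidHom.inl (G v) (G w))
  let fw : G w →* CoprodI M :=
    (CoprodI.of (M := M) (i := true)).comp (MonoidHom.inr (G v) (G w))
  let fu : G u →* CoprodI M := CoprodI.of (M := M) (i := false)
  let κ : ∀ p : V, G p →* CoprodI M := fun p =>
    if h : v = p then h ▸ fv else if h' : w = p then h' ▸ fw else
      if h'' : u = p then h'' ▸ fu else 1
  have hκv : ∀ x : G v, κ v x = CoprodI.of (M := M) (i := true) (MonoidHom.inl (G v) (G w) x) := by
    intro x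
    simp only [κ, dif_pos rfl]
    rfl
  have hκw : ∀ x : G w, κ w x = CoprodI.of (M := M) (i := true) (MonoidHom.inr (G v) (G w) x) := by
    intro x
    simp only [κ, dif_neg hvw, dif_pos rfl]
    rfl
  have hκu : ∀ x : G u, κ u x = CoprodI.of (M := M) (i := false) x := by
    intro x
    simp only [κ, dif_neg hvu, dif_neg hwu, dif_pos rfl]
    rfl
  have hκ1 : ∀ p, v ≠ p → w ≠ p → u ≠ p → ∀ x : G p, κ p x = 1 := by
    intro p h h' h'' x
    simp only [κ, dif_neg h, dif_neg h', dif_neg h'']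
    rfl
  have hrel : ∀ p q, Γ.Adj p q → ∀ (x : G p) (y : G q), Commute (κ p x) (κ q y) := by
    have hclass : ∀ p : V, v = p ∨ w = p ∨ u = p ∨ (v ≠ p ∧ w ≠ p ∧ u ≠ p) := by
      intro p
      by_cases h1 : v = p
      · exact Or.inl h1
      by_cases h2 : w = p
      · exact Or.inr (Or.inl h2)
      by_cases h3 : u = p
      · exact Or.inr (Or.inr (Or.inl h3))
      · exact Or.inr (Or.inr (Or.inr ⟨h1, h2, h3⟩))
    have hvwcomm : ∀ (x : G v) (y : G w),
        Commute (κ v x) (κ w y) := by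
      intro x y
      rw [hκv, hκw]
      have : Commute (MonoidHom.inl (G v) (G w) x) (MonoidHom.inr (G v) (G w) y) := by
        simp only [MonoidHom.inl_apply, MonoidHom.inr_apply, Commute, SemiconjBy,
          Prod.mk_mul_mk, one_mul, mul_one]
      exact this.map (CoprodI.of (M := M) (i := true))
    intro p q hadj x y
    rcases hclass p with rfl | rfl | rfl | ⟨h1, h2, h3⟩
    · rcases hclass q with rfl | rfl | rfl | ⟨g1, g2, g3⟩
      · exact absurd hadj (Γ.irrefl)
      · exact hvwcomm x y
      · exact absurd hadj.symm huv
      · rw [hκ1 q g1 g2 g3]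
        exact Commute.one_right _
    · rcases hclass q with rfl | rfl | rfl | ⟨g1, g2, g3⟩
      · exact (hvwcomm y x).symm
      · exact absurd hadj (Γ.irrefl)
      · exact absurd hadj.symm huw
      · rw [hκ1 q g1 g2 g3]
        exact Commute.one_right _
    · rcases hclass q with rfl | rfl | rfl | ⟨g1, g2, g3⟩
      · exact absurd hadj huv
      · exact absurd hadj huw
      · exact absurd hadj (Γ.irrefl)
      · rw [hκ1 q g1 g2 g3]
        exact Commute.one_right _
    · rw [hκ1 p h1 h2 h3]
      exact Commute.one_left _
  have hletter : ∀ (p : V) (x : G p), ∃ (t : Bool) (m : M t), κ p x = CoprodI.of m := by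
    intro p x
    by_cases h : v = p
    · subst h
      exact ⟨true, _, hκv x⟩
    by_cases h' : w = p
    · subst h'
      exact ⟨true, _, hκw x⟩
    by_cases h'' : u = p
    · subst h''
      exact ⟨false, x, hκu x⟩
    · refine ⟨true, 1, ?_⟩
      rw [hκ1 p h h' h'']
      simp
  refine buildLeft M κ hrel hletter u v w α1 α2 β
    (MonoidHom.inl (G v) (G w) α1) (MonoidHom.inr (G v) (G w) α2) β
    (hκv α1) (hκw α2) (hκu β) ?_ ?_ ?_ hβ
  · exact fun h => hα1 (congrArg Prod.fst h)
  · exact fun h => hα2 (congrArg Prod.snd h)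
  · exact fun h => hα1 (congrArg Prod.fst h)


lemma mulEquivZMod2 {H : Type*} [Group H] [Nontrivial H]
    (h2 : ∀ x y : H, x ≠ 1 → y ≠ 1 → x = y) :
    Nonempty (H ≃* Multiplicative (ZMod 2)) := by
  classical
  obtain ⟨g, hg⟩ := exists_ne (1 : H)
  have hgg : g * g = 1 := by
    by_contra hne
    exact hg (mul_eq_right.mp (h2 (g * g) g hne hg))
  have hcases : ∀ z : ZMod 2, z = 0 ∨ z = 1 := by decide
  refine ⟨MulEquiv.symm ⟨⟨fun x => if Multiplicative.toAdd x = 0 then 1 else g,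
    fun y => Multiplicative.ofAdd (if y = 1 then 0 else 1), ?_, ?_⟩, ?_⟩⟩
  · intro x
    rcases hcases (Multiplicative.toAdd x) with h | h
    · simp only [h, if_pos rfl, if_pos rfl]
      apply Multiplicative.toAdd.injective
      simpa using h.symm
    · simp only [h, if_neg (by decide : (1 : ZMod 2) ≠ 0), if_neg hg]
      apply Multiplicative.toAdd.injective
      simpa using h.symm
  · intro y
    by_cases hy : y = 1
    · simp [hy]
    · simp only [if_neg hy]
      have : Multiplicative.toAdd (Multiplicative.ofAdd (1 : ZMod 2)) = 1 := rfl
      rw [this, if_neg (by decide : (1 : ZMod 2) ≠ 0)]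
      exact h2 g y hg hy
  · intro x y
    show (if Multiplicative.toAdd (x * y) = 0 then (1 : H) else g) =
      (if Multiplicative.toAdd x = 0 then (1 : H) else g) *
        (if Multiplicative.toAdd y = 0 then (1 : H) else g)
    have hxy : Multiplicative.toAdd (x * y) = Multiplicative.toAdd x + Multiplicative.toAdd y :=
      rfl
    rw [hxy]
    rcases hcases (Multiplicative.toAdd x) with hx | hx <;>
      rcases hcases (Multiplicative.toAdd y) with hy | hy <;>
      rw [hx, hy] <;>
      simp [hgg, (by decide : (1 : ZMod 2) ≠ 0), (by decide : (1 + 1 : ZMod 2) = 0)]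

lemma dihedralCase {V : Type*} {Γ : SimpleGraph V} {G : V → Type*} [∀ v, Group (G v)]
    (u v : V) (huv : u ≠ v) (hall : ∀ p : V, p = u ∨ p = v)
    (hnoadj : ∀ p q : V, ¬Γ.Adj p q)
    (eu : G u ≃* Multiplicative (ZMod 2)) (ev : G v ≃* Multiplicative (ZMod 2)) :
    Nonempty (GraphProduct Γ G ≃*
      Monoid.Coprod (Multiplicative (ZMod 2)) (Multiplicative (ZMod 2))) := by
  classical
  have hrels : GraphProductRels Γ G = ∅ := by
    ext x
    simp only [GraphProductRels, Set.mem_setOf_eq, Set.mem_empty_iff_false, iff_false]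
    rintro ⟨p, q, xa, xb, hadj, -⟩
    exact hnoadj p q hadj
  have hbot : Subgroup.normalClosure (GraphProductRels Γ G) = ⊥ := by
    apply le_antisymm
    · exact Subgroup.normalClosure_le_normal (by rw [hrels]; exact Set.empty_subset _)
    · exact bot_le
  let e1 : GraphProduct Γ G ≃* CoprodI G :=
    (QuotientGroup.quotientMulEquivOfEq hbot).trans QuotientGroup.quotientBot
  set A := Multiplicative (ZMod 2) with hA
  let fu : G u →* Monoid.Coprod A A := (Monoid.Coprod.inl (M := A) (N := A)).comp eu.toMonoidHom
  let fv : G v →* Monoid.Coprod A A := (Monoid.Coprod.inr (M := A) (N := A)).comp ev.toMonoidHom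
  let κ : ∀ p : V, G p →* Monoid.Coprod A A := fun p =>
    if h : u = p then h ▸ fu else if h' : v = p then h' ▸ fv else 1
  have hκu : ∀ x : G u, κ u x = Monoid.Coprod.inl (eu x) := by
    intro x
    simp only [κ, dif_pos rfl]
    rfl
  have hκv : ∀ x : G v, κ v x = Monoid.Coprod.inr (ev x) := by
    intro x
    simp only [κ, dif_neg huv, dif_pos rfl]
    rfl
  let F : CoprodI G →* Monoid.Coprod A A := CoprodI.lift κ
  let K : Monoid.Coprod A A →* CoprodI G :=
    Monoid.Coprod.lift ((CoprodI.of (i := u)).comp eu.symm.toMonoidHom)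
      ((CoprodI.of (i := v)).comp ev.symm.toMonoidHom)
  have hKF : K.comp F = MonoidHom.id (CoprodI G) := by
    apply CoprodI.ext_hom
    intro p
    ext x
    rcases hall p with rfl | rfl
    · simp only [MonoidHom.comp_apply, MonoidHom.id_apply, F, CoprodI.lift_of, hκu, K,
        Monoid.Coprod.lift_apply_inl]
      simp
    · simp only [MonoidHom.comp_apply, MonoidHom.id_apply, F, CoprodI.lift_of, hκv, K,
        Monoid.Coprod.lift_apply_inr]
      simp
  have hFK : F.comp K = MonoidHom.id (Monoid.Coprod A A) := by
    apply Monoid.Coprod.hom_ext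
    · ext x
      simp only [MonoidHom.comp_assoc, Monoid.Coprod.lift_comp_inl, MonoidHom.comp_apply,
        MonoidHom.id_apply, K, F, CoprodI.lift_of, hκu]
      simp [hκu]
    · ext x
      simp only [MonoidHom.comp_assoc, Monoid.Coprod.lift_comp_inr, MonoidHom.comp_apply,
        MonoidHom.id_apply, K, F, CoprodI.lift_of, hκv]
      simp [hκv]
  exact ⟨e1.trans (MonoidHom.toMulEquiv F K hKF hFK)⟩

end Build


end GPQI

open GPQI in
/-- A graph product over a finite irreducible graph with at least two
vertices and non-trivial vertex groups contains a quasi-isometrically embedded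
non-abelian free group of rank 2, unless it is the infinite dihedral group
`ℤ/2 * ℤ/2`. -/
theorem graphProduct_qi_free_subgroup {V : Type*} [Fintype V] (Γ : SimpleGraph V)
    (G : V → Type*) [∀ v, Group (G v)] [∀ v, Nontrivial (G v)]
    (hirr : Γ.Irreducible) (hcard : 2 ≤ Fintype.card V) :
    (∃ φ : FreeGroup (Fin 2) →* GraphProduct Γ G, Function.Injective φ ∧
      ∃ c : ℝ, 1 ≤ c ∧ ∃ C : ℝ, 0 ≤ C ∧ ∀ w : FreeGroup (Fin 2),
        (wordLength (⋃ v : V, Set.range (GraphProduct.of (Γ := Γ) (G := G) (v := v)))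
            (φ w) : ℝ) ≤ c * (wordLength (Set.range (FreeGroup.of (α := Fin 2))) w) + C ∧
        (1 / c) * (wordLength (Set.range (FreeGroup.of (α := Fin 2))) w) - C ≤
          (wordLength (⋃ v : V, Set.range (GraphProduct.of (Γ := Γ) (G := G) (v := v)))
            (φ w) : ℝ)) ∨
    Nonempty (GraphProduct Γ G ≃*
      Monoid.Coprod (Multiplicative (ZMod 2)) (Multiplicative (ZMod 2))) := by
  classical
  -- every vertex has a non-neighbour
  have hnon : ∀ p : V, ∃ q : V, q ≠ p ∧ ¬Γ.Adj p q := by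
    intro p
    by_contra hcon
    push_neg at hcon
    apply hirr
    refine ⟨{p}, {p}ᶜ, ⟨p, rfl⟩, ?_, Set.union_compl_self _, Set.inter_compl_self _, ?_⟩
    · obtain ⟨q, hq⟩ := Fintype.exists_ne_of_one_lt_card (by omega) p
      exact ⟨q, hq⟩
    · rintro a ha b hb
      rw [Set.mem_singleton_iff] at ha
      subst ha
      exact hcon b (by simpa using hb)
  obtain ⟨p0⟩ : Nonempty V := Fintype.card_pos_iff.mp (by omega)
  obtain ⟨v0, hv0, hav0⟩ := hnon p0
  by_cases hB : ∃ p q r : V, q ≠ p ∧ r ≠ p ∧ q ≠ r ∧ ¬Γ.Adj p q ∧ ¬Γ.Adj p r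
  · obtain ⟨p, q, r, hqp, hrp, hqr, hpq, hpr⟩ := hB
    obtain ⟨α1, hα1⟩ := exists_ne (1 : G q)
    obtain ⟨α2, hα2⟩ := exists_ne (1 : G r)
    obtain ⟨β, hβ⟩ := exists_ne (1 : G p)
    exact Or.inl (caseB p q r hqp hrp hqr hpq hpr α1 α2 β hα1 hα2 hβ)
  push_neg at hB
  -- card V = 2
  have hcard2 : Fintype.card V = 2 := by
    by_contra hc
    have h3 : 3 ≤ Fintype.card V := by omega
    have hex : ∃ r : V, r ≠ p0 ∧ r ≠ v0 := by
      by_contra hr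
      push_neg at hr
      have hsub : (Finset.univ : Finset V) ⊆ {p0, v0} := by
        intro r _
        rcases eq_or_ne r p0 with rfl | h
        · simp
        · simp [hr r h]
      have h1 := Finset.card_le_card hsub
      have h2 : ({p0, v0} : Finset V).card ≤ 2 :=
        (Finset.card_insert_le _ _).trans (by simp)
      rw [Finset.card_univ] at h1
      omega
    obtain ⟨r, hr1, hr2⟩ := hex
    apply hirr
    refine ⟨{p0, v0}, ({p0, v0} : Set V)ᶜ, ⟨p0, Or.inl rfl⟩, ⟨r, ?_⟩,
      Set.union_compl_self _, Set.inter_compl_self _, ?_⟩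
    · simp [hr1, hr2]
    · rintro a ha b hb
      have hb' : b ≠ p0 ∧ b ≠ v0 := by
        simpa [Set.mem_compl_iff, not_or] using hb
      rcases ha with rfl | ha
      · exact hB a v0 b hv0 hb'.1 (Ne.symm hb'.2) hav0
      · rw [Set.mem_singleton_iff] at ha
        subst ha
        exact hB a p0 b (Ne.symm hv0) hb'.2 (Ne.symm hb'.1) (fun h => hav0 h.symm)
  -- exactly two vertices
  have hall : ∀ z : V, z = p0 ∨ z = v0 := by
    intro z
    by_contra hz
    push_neg at hz
    have h3 : ({p0, v0, z} : Finset V).card = 3 := by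
      rw [Finset.card_insert_of_notMem (by
        simp only [Finset.mem_insert, Finset.mem_singleton]
        push_neg
        exact ⟨Ne.symm hv0, Ne.symm hz.1⟩)]
      rw [Finset.card_insert_of_notMem (by
        simp only [Finset.mem_singleton]
        exact Ne.symm hz.2)]
      simp
    have := Finset.card_le_univ ({p0, v0, z} : Finset V)
    omega
  have hnoadj : ∀ a b : V, ¬Γ.Adj a b := by
    intro a b hadj
    rcases hall a with rfl | rfl <;> rcases hall b with rfl | rfl
    · exact Γ.irrefl hadj
    · exact hav0 hadj
    · exact hav0 hadj.symm
    · exact Γ.irrefl hadj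
  by_cases hbig : ∃ (pp : V) (x y : G pp), x ≠ 1 ∧ y ≠ 1 ∧ x ≠ y
  · obtain ⟨pp, x, y, hx, hy, hxy⟩ := hbig
    obtain ⟨qq, hne, -⟩ := hnon pp
    obtain ⟨β, hβ⟩ := exists_ne (1 : G qq)
    exact Or.inl (caseA qq pp hne.symm hnoadj x y β hx hy hxy hβ)
  · push_neg at hbig
    have hZ : ∀ pp : V, Nonempty (G pp ≃* Multiplicative (ZMod 2)) := fun pp =>
      mulEquivZMod2 (fun x y hx hy => hbig pp x y hx hy)
    exact Or.inr (dihedralCase p0 v0 hv0.symm hall hnoadj (hZ p0).some (hZ v0).some)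
end

section
/- Let Γ be a finite irreducible simplicial graph with |VΓ| ≥ 3 and non-trivial vertex groups, and let v ∈ VΓ with link_Γ(v) non-empty. Then there exist a vertex u ∈ VΓ ∖ link_Γ(v) and a vertex w ∈ link_Γ(v) such that w ∉ link_Γ(u); in particular {u,v,w} spans a subgraph with exactly one edge {v,w}, so G_{{u,v,w}} ≅ (G_v × G_w) * G_u. -/
open scoped commutatorElement

-- aux
lemma GraphProduct.of_commute {V : Type*} {Γ : SimpleGraph V} {G : V → Type*}
    [∀ v, Group (G v)] {p q : V} (h : Γ.Adj p q) (a : G p) (b : G q) :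
    Commute (GraphProduct.of (Γ := Γ) a) (GraphProduct.of (Γ := Γ) b) := by
  rw [← commutatorElement_eq_one_iff_commute]
  show ⁅(QuotientGroup.mk' _) (Monoid.CoprodI.of a), (QuotientGroup.mk' _) (Monoid.CoprodI.of b)⁆ = 1
  rw [← map_commutatorElement]
  exact (QuotientGroup.eq_one_iff _).mpr
    (Subgroup.subset_normalClosure ⟨p, q, a, b, h, rfl⟩)

def eqHom {V : Type*} (G : V → Type*) [∀ x, Group (G x)] {x y : V} (h : x = y) :
    G x →* G y := by subst h; exact MonoidHom.id _

@[simp] lemma eqHom_rfl {V : Type*} (G : V → Type*) [∀ x, Group (G x)] {x : V} :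
    eqHom G (rfl : x = x) = MonoidHom.id _ := rfl

open Classical in
noncomputable def tripleHom {V : Type*} (G : V → Type*) [∀ x, Group (G x)]
    (u v w : V) (x : V) : G x →* Monoid.Coprod (G v × G w) (G u) :=
  if h : x = v then (Monoid.Coprod.inl.comp (MonoidHom.inl (G v) (G w))).comp (eqHom G h)
  else if h : x = w then (Monoid.Coprod.inl.comp (MonoidHom.inr (G v) (G w))).comp (eqHom G h)
  else if h : x = u then (Monoid.Coprod.inr).comp (eqHom G h)
  else 1

section triple
variable {V : Type*} (G : V → Type*) [∀ x, Group (G x)] {u v w : V}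

lemma tripleHom_v : tripleHom G u v w v = Monoid.Coprod.inl.comp (MonoidHom.inl (G v) (G w)) := by
  simp [tripleHom]

lemma tripleHom_w (h : w ≠ v) :
    tripleHom G u v w w = Monoid.Coprod.inl.comp (MonoidHom.inr (G v) (G w)) := by
  simp [tripleHom, h]

lemma tripleHom_u (h1 : u ≠ v) (h2 : u ≠ w) :
    tripleHom G u v w u = Monoid.Coprod.inr := by
  simp [tripleHom, h1, h2]

lemma tripleHom_other {x : V} (h1 : x ≠ v) (h2 : x ≠ w) (h3 : x ≠ u) :
    tripleHom G u v w x = 1 := by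
  simp [tripleHom, h1, h2, h3]

end triple

theorem graphProduct_special_triple {V : Type*} (Γ : SimpleGraph V) (G : V → Type*)
    [∀ x, Group (G x)] {u v w : V} (huv : u ≠ v) (huw : u ≠ w) (hvw : v ≠ w)
    (hadj : Γ.Adj v w) (hvu : ¬Γ.Adj v u) (huwadj : ¬Γ.Adj u w) :
    Nonempty (GraphProduct.special Γ G {u, v, w} ≃* Monoid.Coprod (G v × G w) (G u)) := by
  classical
  set T := Monoid.Coprod (G v × G w) (G u) with hT
  set F := tripleHom G u v w with hF
  -- images of adjacent vertex groups commute under F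
  have hvwcomm : ∀ (a : G v) (b : G w),
      Commute (((Monoid.Coprod.inl : G v × G w →* T).comp (MonoidHom.inl (G v) (G w))) a)
        (((Monoid.Coprod.inl : G v × G w →* T).comp (MonoidHom.inr (G v) (G w))) b) := by
    intro a b
    exact (show Commute ((a, 1) : G v × G w) ((1, b) : G v × G w) by
      simp [Commute, SemiconjBy, Prod.ext_iff]).map (Monoid.Coprod.inl : G v × G w →* T)
  have hcomm : ∀ (p q : V), Γ.Adj p q → ∀ (a : G p) (b : G q), Commute (F p a) (F q b) := by
    intro p q hpq a b
    by_cases hp : p = v ∨ p = w ∨ p = u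
    · by_cases hq : q = v ∨ q = w ∨ q = u
      · rcases hp with rfl | rfl | rfl
        · rcases hq with rfl | rfl | rfl
          · exact absurd hpq (Γ.loopless.irrefl _)
          · rw [hF, tripleHom_v, tripleHom_w G (Ne.symm hvw)]
            exact hvwcomm a b
          · exact absurd hpq hvu
        · rcases hq with rfl | rfl | rfl
          · rw [hF, tripleHom_v, tripleHom_w G (Ne.symm hvw)]
            exact (hvwcomm b a).symm
          · exact absurd hpq (Γ.loopless.irrefl _)
          · exact absurd hpq.symm huwadj
        · rcases hq with rfl | rfl | rfl
          · exact absurd hpq.symm hvu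
          · exact absurd hpq huwadj
          · exact absurd hpq (Γ.loopless.irrefl _)
      · push_neg at hq
        rw [hF, tripleHom_other G hq.1 hq.2.1 hq.2.2]
        simp
    · push_neg at hp
      rw [hF, tripleHom_other G hp.1 hp.2.1 hp.2.2]
      simp
  set φ₀ : Monoid.CoprodI G →* T := Monoid.CoprodI.lift F with hφ₀
  have hker : Subgroup.normalClosure (GraphProductRels Γ G) ≤ φ₀.ker := by
    apply Subgroup.normalClosure_le_normal
    rintro x ⟨p, q, a, b, hpq, rfl⟩
    simp only [SetLike.mem_coe, MonoidHom.mem_ker, map_commutatorElement, hφ₀,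
      Monoid.CoprodI.lift_of]
    exact commutatorElement_eq_one_iff_commute.mpr (hcomm p q hpq a b)
  set φ : GraphProduct Γ G →* T := QuotientGroup.lift _ φ₀ hker with hφ
  have hφof : ∀ (p : V) (g : G p), φ (GraphProduct.of (Γ := Γ) g) = F p g := by
    intro p g
    show φ₀ (Monoid.CoprodI.of g) = _
    rw [hφ₀, Monoid.CoprodI.lift_of]
  set ψ : T →* GraphProduct Γ G := Monoid.Coprod.lift
    ((GraphProduct.of (Γ := Γ) (v := v)).noncommCoprod (GraphProduct.of (Γ := Γ) (v := w))
      (fun a b => GraphProduct.of_commute hadj a b))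
    (GraphProduct.of (Γ := Γ) (v := u)) with hψ
  have genmem : ∀ p ∈ ({u, v, w} : Set V), ∀ g : G p,
      GraphProduct.of (Γ := Γ) g ∈ GraphProduct.special Γ G {u, v, w} := by
    intro p hp g
    exact Subgroup.subset_closure (Set.mem_biUnion hp ⟨g, rfl⟩)
  have hψmem : ∀ t, ψ t ∈ GraphProduct.special Γ G {u, v, w} := by
    intro t
    induction t using Monoid.Coprod.induction_on with
    | inl m =>
      rw [hψ, Monoid.Coprod.lift_apply_inl, MonoidHom.noncommCoprod_apply]
      exact mul_mem (genmem v (by simp) m.1) (genmem w (by simp) m.2)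
    | inr n =>
      rw [hψ, Monoid.Coprod.lift_apply_inr]
      exact genmem u (by simp) n
    | mul x y hx hy => rw [map_mul]; exact mul_mem hx hy
  set ψ' : T →* GraphProduct.special Γ G {u, v, w} := ψ.codRestrict _ hψmem with hψ'
  set φ' : GraphProduct.special Γ G {u, v, w} →* T :=
    φ.comp (GraphProduct.special Γ G {u, v, w}).subtype with hφ'
  have key : ∀ x ∈ GraphProduct.special Γ G {u, v, w}, ψ (φ x) = x := by
    intro x hx
    refine Subgroup.closure_induction (p := fun x _ => ψ (φ x) = x) ?_ (by simp) ?_ ?_ hx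
    · rintro x hxmem
      simp only [Set.mem_iUnion] at hxmem
      obtain ⟨p, hp, g, rfl⟩ := hxmem
      rw [hφof]
      simp only [Set.mem_insert_iff, Set.mem_singleton_iff] at hp
      rcases hp with rfl | rfl | rfl
      · rw [hF, tripleHom_u G huv huw, hψ, Monoid.Coprod.lift_apply_inr]
      · rw [hF, tripleHom_v, hψ]
        simp only [MonoidHom.coe_comp, Function.comp_apply, MonoidHom.inl_apply]
        rw [Monoid.Coprod.lift_apply_inl, MonoidHom.noncommCoprod_apply]
        simp
      · rw [hF, tripleHom_w G (Ne.symm hvw), hψ]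
        simp only [MonoidHom.coe_comp, Function.comp_apply, MonoidHom.inr_apply]
        rw [Monoid.Coprod.lift_apply_inl, MonoidHom.noncommCoprod_apply]
        simp
    · intro x y _ _ hx hy
      simp [map_mul, hx, hy]
    · intro x _ hx
      simp [map_inv, hx]
  have h₁ : ψ'.comp φ' = MonoidHom.id _ := by
    ext x
    exact congrArg Subtype.val (show ψ' (φ' x) = x from Subtype.ext (key x.1 x.2))
  have h₂ : φ'.comp ψ' = MonoidHom.id T := by
    apply Monoid.Coprod.hom_ext
    · refine MonoidHom.ext fun m => ?_
      obtain ⟨a, b⟩ := m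
      simp only [MonoidHom.comp_apply, MonoidHom.id_apply]
      show φ (ψ (Monoid.Coprod.inl (a, b))) = Monoid.Coprod.inl (a, b)
      rw [hψ, Monoid.Coprod.lift_apply_inl, MonoidHom.noncommCoprod_apply, map_mul,
        hφof, hφof, hF, tripleHom_v, tripleHom_w G (Ne.symm hvw)]
      simp [← map_mul, Prod.ext_iff]
    · refine MonoidHom.ext fun n => ?_
      simp only [MonoidHom.comp_apply, MonoidHom.id_apply]
      show φ (ψ (Monoid.Coprod.inr n)) = Monoid.Coprod.inr n
      rw [hψ, Monoid.Coprod.lift_apply_inr, hφof, hF, tripleHom_u G huv huw]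
  exact ⟨MonoidHom.toMulEquiv φ' ψ' h₁ h₂⟩

/-- In a finite irreducible graph with at least 3 vertices and
non-trivial vertex groups, for any vertex `v` with non-empty link there are vertices
`u ∉ link(v)` and `w ∈ link(v)` with `w ∉ link(u)`; the set `{u, v, w}` spans exactly
one edge `{v, w}` and `G_{u,v,w} ≅ (G_v × G_w) * G_u`. -/
theorem graphProduct_one_edge_triple {V : Type*} [Fintype V] (Γ : SimpleGraph V)
    (G : V → Type*) [∀ v, Group (G v)] [∀ v, Nontrivial (G v)]
    (hirr : Γ.Irreducible) (hcard : 3 ≤ Fintype.card V)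
    (v : V) (hlink : (Γ.neighborSet v).Nonempty) :
    ∃ u w : V, u ∉ Γ.neighborSet v ∧ w ∈ Γ.neighborSet v ∧ w ∉ Γ.neighborSet u ∧
      u ≠ v ∧ u ≠ w ∧ v ≠ w ∧ Γ.Adj v w ∧ ¬Γ.Adj v u ∧ ¬Γ.Adj u w ∧
      Nonempty (GraphProduct.special Γ G {u, v, w} ≃*
        Monoid.Coprod (G v × G w) (G u)) := by
  classical
  have hAB : ¬ ∀ a ∈ Γ.neighborSet v, ∀ b ∈ (Γ.neighborSet v)ᶜ, Γ.Adj a b := by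
    intro hall
    exact hirr ⟨Γ.neighborSet v, (Γ.neighborSet v)ᶜ, hlink, ⟨v, by simp⟩,
      Set.union_compl_self _, Set.inter_compl_self _, hall⟩
  push_neg at hAB
  obtain ⟨a, ha, b, hb, hnadj⟩ := hAB
  have hva : Γ.Adj v a := ha
  have hvb : ¬Γ.Adj v b := hb
  have hbv : b ≠ v := by
    rintro rfl
    exact hnadj hva.symm
  have hba : b ≠ a := by
    rintro rfl
    exact hb ha
  have hbanadj : ¬Γ.Adj b a := fun h => hnadj h.symm
  refine ⟨b, a, hb, ha, hbanadj, hbv, hba, hva.ne, hva, hvb, hbanadj,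
    graphProduct_special_triple Γ G hbv hba hva.ne hva hvb hbanadj⟩
end
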